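/- arXiv:1810.05132 — 11 statements merged into one kernel-verified Lean document; each statement's English description precedes it below -/
import Mathlib

section
/- Let K ⊆ L be an extension of ordered fields, each equipped with a compatible non-archimedean absolute value, the one on L extending the one on K, and suppose the value set |K| is dense in ℝ≥0. Then for every f ∈ L, |f| = sup { |r| : r ∈ K, 0 ≤ r ≤ sgn(f)·f }. -/
/-- For an extension `L/K` of ordered fields with compatible non-archimedean absolute
values, with `|K|` dense in `ℝ≥0`, the absolute value of `f ∈ L` is the supremum of the
absolute values of the elements `r ∈ K` with `0 ≤ r ≤ sgn(f)·f = |f|`. -/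
theorem stmt_1 {K L : Type*} [Field K] [LinearOrder K] [IsStrictOrderedRing K]
    [Field L] [LinearOrder L] [IsStrictOrderedRing L]
    (ι : K →+* L) (hmono : ∀ a b : K, a ≤ b → ι a ≤ ι b)
    (v : L → ℝ)
    (hnonneg : ∀ a, 0 ≤ v a) (hzero : ∀ a, v a = 0 ↔ a = 0)
    (hmul : ∀ a b, v (a * b) = v a * v b)
    (hna : ∀ a b, v (a + b) ≤ max (v a) (v b))
    (hcomp : ∀ a b : L, 0 ≤ a → a ≤ b → v a ≤ v b)
    (hdense : ∀ c : ℝ, 0 ≤ c → ∀ ε : ℝ, 0 < ε → ∃ r : K, |v (ι r) - c| < ε)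
    (f : L) :
    IsLUB {t : ℝ | ∃ r : K, 0 ≤ ι r ∧ ι r ≤ |f| ∧ t = v (ι r)} (v f) := by
  have h0 : v 0 = 0 := (hzero 0).2 rfl
  have h1 : v 1 = 1 := by
    have h := hmul 1 1
    rw [one_mul] at h
    have hne : v 1 ≠ 0 := fun hc => one_ne_zero ((hzero 1).1 hc)
    have h2 : v 1 * 1 = v 1 * v 1 := by linarith
    exact (mul_left_cancel₀ hne h2).symm
  have hneg1 : v (-1) = 1 := by
    have h := hmul (-1) (-1)
    rw [neg_mul_neg, one_mul, h1] at h
    nlinarith [hnonneg (-1)]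
  have hvneg : ∀ a : L, v (-a) = v a := by
    intro a
    have h := hmul (-1) a
    rw [neg_one_mul, hneg1, one_mul] at h
    exact h
  have hvabs : ∀ a : L, v |a| = v a := by
    intro a
    rcases abs_cases a with ⟨h, _⟩ | ⟨h, _⟩
    · rw [h]
    · rw [h, hvneg]
  constructor
  · rintro t ⟨r, hr0, hrf, rfl⟩
    have := hcomp (ι r) |f| hr0 hrf
    rwa [hvabs] at this
  · intro b hb
    have hb0 : 0 ≤ b := by
      have : (0 : ℝ) ∈ {t : ℝ | ∃ r : K, 0 ≤ ι r ∧ ι r ≤ |f| ∧ t = v (ι r)} :=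
        ⟨0, by simp, by simp [abs_nonneg], by simp [h0]⟩
      exact hb this
    by_contra hlt
    push_neg at hlt
    obtain ⟨r, hr⟩ := hdense ((b + v f) / 2) (by linarith) ((v f - b) / 2) (by linarith)
    rw [abs_lt] at hr
    have hlo : b < v (ι r) := by linarith [hr.1, hr.2]
    have hhi : v (ι r) < v f := by linarith [hr.1, hr.2]
    have hs0 : 0 ≤ ι |r| := by
      have := hmono 0 |r| (abs_nonneg r)
      rwa [map_zero] at this
    have hvs : v (ι |r|) = v (ι r) := by
      rcases abs_cases r with ⟨h, _⟩ | ⟨h, _⟩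
      · rw [h]
      · rw [h, map_neg, hvneg]
    have hsf : ι |r| ≤ |f| := by
      by_contra hgt
      push_neg at hgt
      have := hcomp |f| (ι |r|) (abs_nonneg f) hgt.le
      rw [hvabs, hvs] at this
      linarith
    have := hb ⟨|r|, hs0, hsf, hvs.symm⟩
    linarith
end

section
/- Let A be a commutative ring and let |·|ˢ : A → ℝ be a signed seminorm, i.e., |fg|ˢ = |f|ˢ·|g|ˢ and min(|f|ˢ,|g|ˢ) ≤ |f+g|ˢ ≤ max(|f|ˢ,|g|ˢ) for all f,g, and |1|ˢ = 1, |-1|ˢ = -1. Then the set P = { f ∈ A : |f|ˢ ≥ 0 } is an ordering of A, i.e., P + P ⊆ P, P·P ⊆ P, P ∪ (−P) = A, and P ∩ (−P) is a prime ideal of A. -/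
/-- For a signed seminorm `s` on a commutative ring `A`, the set
`P = {f : 0 ≤ s f}` is an ordering of `A`: it is closed under addition and
multiplication, `P ∪ -P = A`, and `P ∩ -P` is a prime ideal. -/
theorem stmt_2 {A : Type*} [CommRing A] (s : A → ℝ)
    (hmul : ∀ f g, s (f * g) = s f * s g)
    (hadd₁ : ∀ f g, min (s f) (s g) ≤ s (f + g))
    (hadd₂ : ∀ f g, s (f + g) ≤ max (s f) (s g))
    (h1 : s 1 = 1) (hneg1 : s (-1) = -1) :
    (∀ f g : A, 0 ≤ s f → 0 ≤ s g → 0 ≤ s (f + g)) ∧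
    (∀ f g : A, 0 ≤ s f → 0 ≤ s g → 0 ≤ s (f * g)) ∧
    (∀ f : A, 0 ≤ s f ∨ 0 ≤ s (-f)) ∧
    (∃ I : Ideal A, I.IsPrime ∧ ∀ f : A, f ∈ I ↔ (0 ≤ s f ∧ 0 ≤ s (-f))) := by
  have hneg : ∀ f : A, s (-f) = - s f := by
    intro f
    have := hmul (-1) f
    simp only [neg_one_mul, hneg1] at this
    linarith
  have hzero : s 0 = 0 := by
    have h := hneg 0
    rw [neg_zero] at h
    linarith
  refine ⟨fun f g hf hg => le_trans (le_min hf hg) (hadd₁ f g),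
    fun f g hf hg => by rw [hmul]; exact mul_nonneg hf hg, ?_, ?_⟩
  · intro f
    rcases le_or_gt 0 (s f) with h | h
    · exact Or.inl h
    · right; rw [hneg]; linarith
  · refine ⟨{ carrier := {f | s f = 0}
              add_mem' := ?_
              zero_mem' := hzero
              smul_mem' := ?_ }, ?_, ?_⟩
    · intro a b ha hb
      simp only [Set.mem_setOf_eq] at *
      have h1' := hadd₁ a b
      have h2' := hadd₂ a b
      rw [ha, hb] at h1' h2'
      simp at h1' h2'
      linarith
    · intro c x hx
      simp only [Set.mem_setOf_eq, smul_eq_mul] at *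
      rw [hmul, hx, mul_zero]
    · constructor
      · intro h
        have : (1 : A) ∈ (⊤ : Ideal A) := trivial
        rw [← h] at this
        simp only [Submodule.mem_mk, AddSubmonoid.mem_mk, AddSubsemigroup.mem_mk,
          Set.mem_setOf_eq] at this
        rw [h1] at this; norm_num at this
      · intro x y hxy
        simp only [Submodule.mem_mk, AddSubmonoid.mem_mk, AddSubsemigroup.mem_mk,
          Set.mem_setOf_eq, hmul] at *
        exact mul_eq_zero.mp hxy
    · intro f
      simp only [Submodule.mem_mk, AddSubmonoid.mem_mk, AddSubsemigroup.mem_mk,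
        Set.mem_setOf_eq, hneg]
      constructor
      · intro h; rw [h]; simp
      · intro ⟨h1', h2'⟩; linarith
end

section
/- Let L be a field with a non-archimedean absolute value |·| : L → ℝ≥0 and let P be an ordering of L compatible with |·|. Let O = { a ∈ L : |a| ≤ 1 } be the valuation ring, m = { a : |a| < 1 } its maximal ideal, and k = O/m the residue field. Then the set P̄ = { ā ∈ k : a ∈ P ∩ O } is an ordering of the field k. -/
set_option synthInstance.maxHeartbeats 1000000 in
set_option maxHeartbeats 1000000 in
/-- Let `L` be a field with a non-archimedean absolute value `v`, `P` a compatible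
ordering of `L`, `O` the valuation ring, `m` its maximal ideal and `k = O ⧸ m` the
residue field.  Then the image `P̄` of `P ∩ O` in `k` is an ordering of `k`. -/
theorem stmt_5 {L : Type*} [Field L] (v : L → ℝ)
    (hnonneg : ∀ a, 0 ≤ v a) (hzero : ∀ a, v a = 0 ↔ a = 0)
    (hmul : ∀ a b, v (a * b) = v a * v b)
    (hna : ∀ a b, v (a + b) ≤ max (v a) (v b))
    (P : Set L)
    (hPadd : ∀ a ∈ P, ∀ b ∈ P, a + b ∈ P)
    (hPmul : ∀ a ∈ P, ∀ b ∈ P, a * b ∈ P)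
    (hPtot : ∀ a : L, a ∈ P ∨ -a ∈ P)
    (hPsupp : ∀ a : L, a ∈ P → -a ∈ P → a = 0)
    (hPcomp : ∀ a b : L, a ∈ P → b ∈ P → b - a ∈ P → v a ≤ v b)
    (O : Subring L) (hO : ∀ a : L, a ∈ O ↔ v a ≤ 1)
    (m : Ideal O) (hm : ∀ a : O, a ∈ m ↔ v (a : L) < 1) :
    let Pbar : Set (O ⧸ m) := {x | ∃ a : O, (a : L) ∈ P ∧ Ideal.Quotient.mk m a = x}
    (∀ x ∈ Pbar, ∀ y ∈ Pbar, x + y ∈ Pbar) ∧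
    (∀ x ∈ Pbar, ∀ y ∈ Pbar, x * y ∈ Pbar) ∧
    (∀ x : O ⧸ m, x ∈ Pbar ∨ -x ∈ Pbar) ∧
    (∀ x : O ⧸ m, x ∈ Pbar → -x ∈ Pbar → x = 0) := by
  intro Pbar
  refine ⟨?_, ?_, ?_, ?_⟩
  · rintro x ⟨a, ha, rfl⟩ y ⟨b, hb, rfl⟩
    exact ⟨a + b, hPadd _ ha _ hb, by simp⟩
  · rintro x ⟨a, ha, rfl⟩ y ⟨b, hb, rfl⟩
    exact ⟨a * b, hPmul _ ha _ hb, by simp⟩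
  · intro x
    obtain ⟨a, rfl⟩ := Ideal.Quotient.mk_surjective x
    rcases hPtot (a : L) with h | h
    · exact Or.inl ⟨a, h, rfl⟩
    · exact Or.inr ⟨-a, by simpa using h, by simp⟩
  · rintro x ⟨a, ha, rfl⟩ ⟨b, hb, hbx⟩
    have hab : (a + b : O) ∈ m := by
      rw [← Ideal.Quotient.eq_zero_iff_mem, map_add, hbx]
      ring
    have habP : (a : L) + (b : L) ∈ P := hPadd _ ha _ hb
    have hva : v (a : L) ≤ v ((a : L) + b) := by
      refine hPcomp _ _ ha habP ?_
      simpa using hb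
    have : v (a : L) < 1 := lt_of_le_of_lt hva (by simpa using (hm (a + b)).1 hab)
    rw [Ideal.Quotient.eq_zero_iff_mem, hm]
    exact this
end

section
/- The orderings of the polynomial ring ℝ[T] are exactly the following: for each a ∈ ℝ, the sets P_a = {f : f(a) ≥ 0}, P_{a+} = {f : f ≥ 0 on [a, a+ε] for some ε > 0}, P_{a-} = {f : f ≥ 0 on [a−ε, a] for some ε > 0}, and the two sets P_∞ = {f : f ≥ 0 on [b, ∞) for some b} and P_{−∞} = {f : f ≥ 0 on (−∞, b] for some b}. In particular, each of these sets is an ordering of ℝ[T], and every ordering of ℝ[T] equals one of them. -/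
/-- An ordering of the ring `ℝ[T]`. -/
def IsOrderingP (P : Set (Polynomial ℝ)) : Prop :=
  (∀ f ∈ P, ∀ g ∈ P, f + g ∈ P) ∧ (∀ f ∈ P, ∀ g ∈ P, f * g ∈ P) ∧
  (∀ f : Polynomial ℝ, f ∈ P ∨ -f ∈ P) ∧
  ∃ I : Ideal (Polynomial ℝ), I.IsPrime ∧ ∀ f : Polynomial ℝ, f ∈ I ↔ (f ∈ P ∧ -f ∈ P)

def Pa (a : ℝ) : Set (Polynomial ℝ) := {f | 0 ≤ f.eval a}

def PaPlus (a : ℝ) : Set (Polynomial ℝ) :=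
  {f | ∃ ε : ℝ, 0 < ε ∧ ∀ x ∈ Set.Icc a (a + ε), 0 ≤ f.eval x}

def PaMinus (a : ℝ) : Set (Polynomial ℝ) :=
  {f | ∃ ε : ℝ, 0 < ε ∧ ∀ x ∈ Set.Icc (a - ε) a, 0 ≤ f.eval x}

def Pinf : Set (Polynomial ℝ) := {f | ∃ b : ℝ, ∀ x : ℝ, b ≤ x → 0 ≤ f.eval x}

def PnegInf : Set (Polynomial ℝ) := {f | ∃ b : ℝ, ∀ x : ℝ, x ≤ b → 0 ≤ f.eval x}

open Polynomial Set Filter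

namespace StmtSix

variable {P : Set (Polynomial ℝ)}


variable {P : Set (Polynomial ℝ)}

/-- Closure hypotheses bundle (weaker than full ordering). -/
def Cone (P : Set (Polynomial ℝ)) : Prop :=
  (∀ f ∈ P, ∀ g ∈ P, f + g ∈ P) ∧ (∀ f ∈ P, ∀ g ∈ P, f * g ∈ P) ∧
  (∀ f : Polynomial ℝ, f ∈ P ∨ -f ∈ P)

lemma Cone.sq_mem (hP : Cone P) (f : Polynomial ℝ) : f * f ∈ P := by
  rcases hP.2.2 f with h | h
  · exact hP.2.1 f h f h
  · have := hP.2.1 _ h _ h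
    simpa using this

lemma Cone.C_mem (hP : Cone P) {c : ℝ} (hc : 0 ≤ c) : C c ∈ P := by
  have := hP.sq_mem (C (Real.sqrt c))
  rwa [← C_mul, Real.mul_self_sqrt hc] at this

lemma Cone.zero_mem (hP : Cone P) : (0 : Polynomial ℝ) ∈ P := by
  simpa using hP.C_mem le_rfl

lemma Cone.one_mem (hP : Cone P) : (1 : Polynomial ℝ) ∈ P := by
  simpa using hP.C_mem zero_le_one

lemma Cone.pow_mem (hP : Cone P) {f : Polynomial ℝ} (hf : f ∈ P) (k : ℕ) : f ^ k ∈ P := by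
  induction k with
  | zero => simpa using hP.one_mem
  | succ n ih => rw [pow_succ]; exact hP.2.1 _ ih _ hf

/-- extraction of a positive-definite quadratic factor from a root-free polynomial -/
lemma exists_quad_factor {f : Polynomial ℝ} (hd : f.natDegree ≠ 0)
    (hroot : ∀ r : ℝ, f.eval r ≠ 0) :
    ∃ s t g, 0 < t ∧ f = ((X - C s) ^ 2 + C t) * g := by
  have hdeg : f.degree ≠ 0 := fun h => hd (natDegree_eq_zero_iff_degree_le_zero.mpr h.le)
  obtain ⟨z, hz⟩ : ∃ z : ℂ, aeval z f = 0 :=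
    IsAlgClosed.exists_aeval_eq_zero ℂ f hdeg
  have him : z.im ≠ 0 := by
    intro h0
    have : z = ((z.re : ℝ) : ℂ) := Complex.ext rfl (by simp [h0])
    rw [this] at hz
    rw [show ((z.re : ℝ) : ℂ) = RCLike.ofReal z.re from rfl, aeval_ofReal] at hz
    exact hroot z.re (by simpa using hz)
  obtain ⟨g, hg⟩ := f.quadratic_dvd_of_aeval_eq_zero_im_ne_zero hz him
  refine ⟨z.re, z.im ^ 2, g, by positivity, ?_⟩
  rw [hg]
  congr 1
  have hnorm : ‖z‖ ^ 2 = z.re ^ 2 + z.im ^ 2 := by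
    rw [Complex.sq_norm, Complex.normSq_apply]; ring
  rw [hnorm]
  simp only [C_add, C_mul, C_pow, map_ofNat]
  ring

lemma Cone.quad_mem (hP : Cone P) (s : ℝ) {t : ℝ} (ht : 0 < t) :
    (X - C s) ^ 2 + C t ∈ P := by
  have h1 : (X - C s) ^ 2 ∈ P := by
    have := hP.sq_mem (X - C s); rwa [← sq] at this
  exact hP.1 _ h1 _ (hP.C_mem ht.le)



lemma quad_natDegree (s t : ℝ) : (((X : Polynomial ℝ) - C s) ^ 2 + C t).natDegree = 2 := by
  compute_degree!

lemma quad_ne_zero (s t : ℝ) : (((X : Polynomial ℝ) - C s) ^ 2 + C t) ≠ 0 := by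
  intro h
  have := quad_natDegree s t
  rw [h] at this
  simp at this

lemma quad_monic (s t : ℝ) : (((X : Polynomial ℝ) - C s) ^ 2 + C t).Monic := by
  apply Monic.add_of_left ((monic_X_sub_C s).pow 2)
  rw [degree_pow, degree_X_sub_C]
  exact lt_of_le_of_lt degree_C_le (by decide)

lemma Cone.memC (hP : Cone P) (a : ℝ)
    (hL : ∀ r : ℝ, r < a → X - C r ∈ P) (hR : ∀ r : ℝ, a < r → C r - X ∈ P) :
    ∀ f : Polynomial ℝ, 0 < f.eval a → f ∈ P := by
  suffices H : ∀ n : ℕ, ∀ f : Polynomial ℝ, f.natDegree ≤ n → 0 < f.eval a → f ∈ P from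
    fun f hf => H f.natDegree f le_rfl hf
  intro n
  induction n using Nat.strong_induction_on with
  | _ n IH =>
  intro f hdeg hfa
  by_cases h0 : f.natDegree = 0
  · have hc := eq_C_of_natDegree_eq_zero h0
    rw [hc] at hfa ⊢
    rw [eval_C] at hfa
    exact hP.C_mem hfa.le
  by_cases hroot : ∃ r : ℝ, f.eval r = 0
  · obtain ⟨r, hr⟩ := hroot
    have hra : r ≠ a := by rintro rfl; rw [hr] at hfa; exact lt_irrefl 0 hfa
    obtain ⟨h, hh⟩ := dvd_iff_isRoot.mpr hr
    have hhne : h ≠ 0 := by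
      rintro rfl
      rw [hh] at hfa; simp at hfa
    have e : f.natDegree = 1 + h.natDegree := by
      rw [hh, natDegree_mul (X_sub_C_ne_zero r) hhne, natDegree_X_sub_C]
    have heval : f.eval a = (a - r) * h.eval a := by rw [hh]; simp
    rcases lt_or_gt_of_ne hra with hlt | hgt
    · have hha : 0 < h.eval a := by nlinarith [hfa, heval]
      have hmem : h ∈ P := IH h.natDegree (by omega) h le_rfl hha
      rw [hh]; exact hP.2.1 _ (hL r hlt) _ hmem
    · have hha : 0 < (-h).eval a := by
        rw [eval_neg]
        nlinarith [hfa, heval]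
      have hmem : -h ∈ P := IH (-h).natDegree (by rw [natDegree_neg]; omega) (-h) le_rfl hha
      have hf2 : f = (C r - X) * (-h) := by rw [hh]; ring
      rw [hf2]; exact hP.2.1 _ (hR r hgt) _ hmem
  · push_neg at hroot
    obtain ⟨s, t, g, ht, hf⟩ := exists_quad_factor h0 hroot
    have hgne : g ≠ 0 := by
      rintro rfl
      rw [hf] at hfa; simp at hfa
    have e : f.natDegree = 2 + g.natDegree := by
      rw [hf, natDegree_mul (quad_ne_zero s t) hgne, quad_natDegree]
    have heval : f.eval a = ((a - s) ^ 2 + t) * g.eval a := by rw [hf]; simp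
    have hga : 0 < g.eval a := by nlinarith [hfa, heval, sq_nonneg (a - s)]
    have hmem : g ∈ P := IH g.natDegree (by omega) g le_rfl hga
    rw [hf]; exact hP.2.1 _ (hP.quad_mem s ht) _ hmem

lemma Cone.memA (hP : Cone P) (hT : ∀ c : ℝ, X - C c ∈ P) :
    ∀ f : Polynomial ℝ, 0 < f.leadingCoeff → f ∈ P := by
  suffices H : ∀ n : ℕ, ∀ f : Polynomial ℝ, f.natDegree ≤ n → 0 < f.leadingCoeff → f ∈ P from
    fun f hf => H f.natDegree f le_rfl hf
  intro n
  induction n using Nat.strong_induction_on with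
  | _ n IH =>
  intro f hdeg hfa
  by_cases h0 : f.natDegree = 0
  · have hc := eq_C_of_natDegree_eq_zero h0
    have : f.leadingCoeff = f.coeff 0 := by rw [leadingCoeff, h0]
    rw [this] at hfa
    rw [hc]
    exact hP.C_mem hfa.le
  by_cases hroot : ∃ r : ℝ, f.eval r = 0
  · obtain ⟨r, hr⟩ := hroot
    obtain ⟨h, hh⟩ := dvd_iff_isRoot.mpr hr
    have hhne : h ≠ 0 := by
      rintro rfl
      rw [mul_zero] at hh
      rw [hh] at hfa
      simp at hfa
    have e : f.natDegree = 1 + h.natDegree := by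
      rw [hh, natDegree_mul (X_sub_C_ne_zero r) hhne, natDegree_X_sub_C]
    have hlc : f.leadingCoeff = h.leadingCoeff := by
      rw [hh, leadingCoeff_mul, leadingCoeff_X_sub_C, one_mul]
    have hmem : h ∈ P := IH h.natDegree (by omega) h le_rfl (hlc ▸ hfa)
    rw [hh]; exact hP.2.1 _ (hT r) _ hmem
  · push_neg at hroot
    obtain ⟨s, t, g, ht, hf⟩ := exists_quad_factor h0 hroot
    have hgne : g ≠ 0 := by
      rintro rfl
      rw [mul_zero] at hf
      rw [hf] at h0
      simp at h0
    have e : f.natDegree = 2 + g.natDegree := by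
      rw [hf, natDegree_mul (quad_ne_zero s t) hgne, quad_natDegree]
    have hlc : f.leadingCoeff = g.leadingCoeff := by
      rw [hf, leadingCoeff_mul, (quad_monic s t).leadingCoeff, one_mul]
    have hmem : g ∈ P := IH g.natDegree (by omega) g le_rfl (hlc ▸ hfa)
    rw [hf]; exact hP.2.1 _ (hP.quad_mem s ht) _ hmem



lemma eval_pos_near {g : Polynomial ℝ} {a : ℝ} (h : 0 < g.eval a) :
    ∃ δ : ℝ, 0 < δ ∧ ∀ x : ℝ, |x - a| ≤ δ → 0 < g.eval x := by
  have h2 : ∀ᶠ x in nhds a, g.eval x ∈ Set.Ioi (0 : ℝ) :=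
    (g.continuousAt).eventually_mem (isOpen_Ioi.mem_nhds h)
  rw [Metric.eventually_nhds_iff] at h2
  obtain ⟨ε, hε, h3⟩ := h2
  exact ⟨ε / 2, by linarith, fun x hx => h3 (by rw [Real.dist_eq]; linarith [hx])⟩

lemma decomp {f : Polynomial ℝ} (hf : f ≠ 0) (a : ℝ) :
    ∃ k g, (g : Polynomial ℝ).eval a ≠ 0 ∧ f = (X - C a) ^ k * g :=
  ⟨rootMultiplicity a f, f /ₘ (X - C a) ^ rootMultiplicity a f,
    eval_divByMonic_pow_rootMultiplicity_ne_zero a hf,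
    (pow_mul_divByMonic_rootMultiplicity_eq f a).symm⟩

lemma decomp' {f : Polynomial ℝ} (hf : f ≠ 0) (a : ℝ) :
    ∃ k h, (h : Polynomial ℝ).eval a ≠ 0 ∧ f = (C a - X) ^ k * h := by
  obtain ⟨k, g, hg, hfg⟩ := decomp hf a
  refine ⟨k, (-1) ^ k * g, ?_, ?_⟩
  · rw [eval_mul, eval_pow, eval_neg, eval_one]
    exact mul_ne_zero (pow_ne_zero _ (by norm_num)) hg
  · rw [hfg, ← mul_assoc, ← mul_pow, show (C a - X) * (-1) = X - C a from by ring]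

lemma zero_mem_PaPlus (a : ℝ) : (0 : Polynomial ℝ) ∈ PaPlus a :=
  ⟨1, one_pos, fun x _ => by simp⟩

lemma zero_mem_PaMinus (a : ℝ) : (0 : Polynomial ℝ) ∈ PaMinus a :=
  ⟨1, one_pos, fun x _ => by simp⟩

lemma PaPlus_total (a : ℝ) (f : Polynomial ℝ) : f ∈ PaPlus a ∨ -f ∈ PaPlus a := by
  by_cases hf : f = 0
  · exact Or.inl (hf ▸ zero_mem_PaPlus a)
  obtain ⟨k, g, hg, hfg⟩ := decomp hf a
  have heval : ∀ x : ℝ, f.eval x = (x - a) ^ k * g.eval x := by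
    intro x; rw [hfg]; simp
  rcases hg.lt_or_gt with hneg | hpos
  · right
    obtain ⟨δ, hδ, h⟩ := eval_pos_near (g := -g) (by simpa using hneg)
    refine ⟨δ, hδ, fun x hx => ?_⟩
    have h1 := h x (by rw [abs_le]; constructor <;> [linarith [hx.1]; linarith [hx.2]])
    rw [eval_neg] at h1 ⊢
    rw [heval x]
    have : 0 ≤ (x - a) ^ k := pow_nonneg (by linarith [hx.1]) k
    nlinarith
  · left
    obtain ⟨δ, hδ, h⟩ := eval_pos_near hpos
    refine ⟨δ, hδ, fun x hx => ?_⟩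
    have h1 := h x (by rw [abs_le]; constructor <;> [linarith [hx.1]; linarith [hx.2]])
    rw [heval x]
    have : 0 ≤ (x - a) ^ k := pow_nonneg (by linarith [hx.1]) k
    nlinarith

lemma PaMinus_total (a : ℝ) (f : Polynomial ℝ) : f ∈ PaMinus a ∨ -f ∈ PaMinus a := by
  by_cases hf : f = 0
  · exact Or.inl (hf ▸ zero_mem_PaMinus a)
  obtain ⟨k, g, hg, hfg⟩ := decomp' hf a
  have heval : ∀ x : ℝ, f.eval x = (a - x) ^ k * g.eval x := by
    intro x; rw [hfg]; simp
  rcases hg.lt_or_gt with hneg | hpos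
  · right
    obtain ⟨δ, hδ, h⟩ := eval_pos_near (g := -g) (by simpa using hneg)
    refine ⟨δ, hδ, fun x hx => ?_⟩
    have h1 := h x (by rw [abs_le]; constructor <;> [linarith [hx.1]; linarith [hx.2]])
    rw [eval_neg] at h1 ⊢
    rw [heval x]
    have : 0 ≤ (a - x) ^ k := pow_nonneg (by linarith [hx.2]) k
    nlinarith
  · left
    obtain ⟨δ, hδ, h⟩ := eval_pos_near hpos
    refine ⟨δ, hδ, fun x hx => ?_⟩
    have h1 := h x (by rw [abs_le]; constructor <;> [linarith [hx.1]; linarith [hx.2]])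
    rw [heval x]
    have : 0 ≤ (a - x) ^ k := pow_nonneg (by linarith [hx.2]) k
    nlinarith

lemma lc_nonneg_mem_Pinf {f : Polynomial ℝ} (h : 0 ≤ f.leadingCoeff) : f ∈ Pinf := by
  by_cases hdeg : f.degree ≤ 0
  · refine ⟨0, fun x _ => ?_⟩
    rw [eq_C_of_degree_le_zero hdeg, eval_C]
    have : f.natDegree = 0 := natDegree_eq_zero_iff_degree_le_zero.mpr hdeg
    rw [leadingCoeff, this] at h
    exact h
  · have ht := tendsto_atTop_of_leadingCoeff_nonneg f (not_le.mp hdeg) h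
    obtain ⟨b, hb⟩ := eventually_atTop.mp (ht.eventually_ge_atTop 0)
    exact ⟨b, hb⟩

lemma Pinf_total (f : Polynomial ℝ) : f ∈ Pinf ∨ -f ∈ Pinf := by
  rcases le_total 0 f.leadingCoeff with h | h
  · exact Or.inl (lc_nonneg_mem_Pinf h)
  · exact Or.inr (lc_nonneg_mem_Pinf (by rw [leadingCoeff_neg]; linarith))

lemma zero_mem_Pinf : (0 : Polynomial ℝ) ∈ Pinf := ⟨0, fun x _ => by simp⟩

lemma Pinf_support {f : Polynomial ℝ} (h1 : f ∈ Pinf) (h2 : -f ∈ Pinf) : f = 0 := by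
  obtain ⟨b1, hb1⟩ := h1
  obtain ⟨b2, hb2⟩ := h2
  apply f.eq_zero_of_infinite_isRoot
  apply Set.Infinite.mono (s := Set.Ici (max b1 b2))
  · intro x hx
    have e1 := hb1 x (le_trans (le_max_left _ _) hx)
    have e2 := hb2 x (le_trans (le_max_right _ _) hx)
    rw [eval_neg] at e2
    simp only [Set.mem_setOf_eq, IsRoot.def]
    linarith
  · exact Set.Ici_infinite _

lemma mem_Pinf_lc {f : Polynomial ℝ} (h : f ∈ Pinf) : 0 ≤ f.leadingCoeff := by
  by_contra h'
  push_neg at h'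
  have h2 : -f ∈ Pinf := lc_nonneg_mem_Pinf (by rw [leadingCoeff_neg]; linarith)
  have := Pinf_support h h2
  rw [this] at h'
  simp at h'

lemma comp_negX_eval (f : Polynomial ℝ) (x : ℝ) : (f.comp (-X)).eval x = f.eval (-x) := by
  rw [eval_comp]; simp

lemma comp_negX_comp_negX (f : Polynomial ℝ) : (f.comp (-X)).comp (-X) = f := by
  rw [comp_assoc, neg_comp, X_comp, neg_neg, comp_X]

lemma mem_PnegInf_iff {f : Polynomial ℝ} : f ∈ PnegInf ↔ f.comp (-X) ∈ Pinf := by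
  constructor
  · rintro ⟨b, hb⟩
    exact ⟨-b, fun x hx => by rw [comp_negX_eval]; exact hb _ (by linarith)⟩
  · rintro ⟨b, hb⟩
    refine ⟨-b, fun x hx => ?_⟩
    have := hb (-x) (by linarith)
    rwa [comp_negX_eval, neg_neg] at this

lemma PaPlus_g_pos {a : ℝ} {f g : Polynomial ℝ} {k : ℕ} (hf : f ∈ PaPlus a)
    (hfg : f = (X - C a) ^ k * g) (hga : g.eval a ≠ 0) : 0 < g.eval a := by
  rcases hga.lt_or_gt with hneg | hpos
  · exfalso
    obtain ⟨δ, hδ, h⟩ := eval_pos_near (g := -g) (by simpa using hneg)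
    obtain ⟨ε, hε, hf'⟩ := hf
    set m := min δ ε with hm
    have hm0 : 0 < m := lt_min hδ hε
    set x := a + m / 2 with hx
    have hxa : x - a = m / 2 := by rw [hx]; ring
    have h1 := h x (by rw [hxa, abs_of_nonneg (by linarith)]; linarith [min_le_left δ ε])
    have h2 := hf' x ⟨by rw [hx]; linarith, by rw [hx]; linarith [min_le_right δ ε]⟩
    rw [eval_neg] at h1
    have h3 : f.eval x = (x - a) ^ k * g.eval x := by rw [hfg]; simp
    have h4 : (0:ℝ) < (x - a) ^ k := pow_pos (by rw [hxa]; linarith) k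
    nlinarith
  · exact hpos

lemma PaMinus_g_pos {a : ℝ} {f g : Polynomial ℝ} {k : ℕ} (hf : f ∈ PaMinus a)
    (hfg : f = (C a - X) ^ k * g) (hga : g.eval a ≠ 0) : 0 < g.eval a := by
  rcases hga.lt_or_gt with hneg | hpos
  · exfalso
    obtain ⟨δ, hδ, h⟩ := eval_pos_near (g := -g) (by simpa using hneg)
    obtain ⟨ε, hε, hf'⟩ := hf
    set m := min δ ε with hm
    have hm0 : 0 < m := lt_min hδ hε
    set x := a - m / 2 with hx
    have hxa : a - x = m / 2 := by rw [hx]; ring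
    have h1 := h x (by rw [show x - a = -(m/2) from by rw [hx]; ring, abs_neg, abs_of_nonneg (by linarith)]; linarith [min_le_left δ ε])
    have h2 := hf' x ⟨by rw [hx]; linarith [min_le_right δ ε], by rw [hx]; linarith⟩
    rw [eval_neg] at h1
    have h3 : f.eval x = (a - x) ^ k * g.eval x := by rw [hfg]; simp
    have h4 : (0:ℝ) < (a - x) ^ k := pow_pos (by rw [hxa]; linarith) k
    nlinarith
  · exact hpos


lemma zero_mem_PnegInf : (0 : Polynomial ℝ) ∈ PnegInf := ⟨0, fun x _ => by simp⟩

lemma PnegInf_total (f : Polynomial ℝ) : f ∈ PnegInf ∨ -f ∈ PnegInf := by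
  rcases Pinf_total (f.comp (-X)) with h | h
  · exact Or.inl (mem_PnegInf_iff.mpr h)
  · right
    apply mem_PnegInf_iff.mpr
    rwa [neg_comp]

lemma PnegInf_support {f : Polynomial ℝ} (h1 : f ∈ PnegInf) (h2 : -f ∈ PnegInf) : f = 0 := by
  have e1 := mem_PnegInf_iff.mp h1
  have e2 := mem_PnegInf_iff.mp h2
  rw [neg_comp] at e2
  have := Pinf_support e1 e2
  rw [← comp_negX_comp_negX f, this, zero_comp]

lemma PaPlus_support {a : ℝ} {f : Polynomial ℝ} (h1 : f ∈ PaPlus a) (h2 : -f ∈ PaPlus a) :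
    f = 0 := by
  obtain ⟨e1, he1, hb1⟩ := h1
  obtain ⟨e2, he2, hb2⟩ := h2
  apply f.eq_zero_of_infinite_isRoot
  apply Set.Infinite.mono (s := Set.Icc a (a + min e1 e2))
  · intro x hx
    have u1 := hb1 x ⟨hx.1, le_trans hx.2 (by linarith [min_le_left e1 e2])⟩
    have u2 := hb2 x ⟨hx.1, le_trans hx.2 (by linarith [min_le_right e1 e2])⟩
    rw [eval_neg] at u2
    simp only [Set.mem_setOf_eq, IsRoot.def]
    linarith
  · exact Set.Icc_infinite (by simp [lt_min he1 he2])

lemma PaMinus_support {a : ℝ} {f : Polynomial ℝ} (h1 : f ∈ PaMinus a) (h2 : -f ∈ PaMinus a) :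
    f = 0 := by
  obtain ⟨e1, he1, hb1⟩ := h1
  obtain ⟨e2, he2, hb2⟩ := h2
  apply f.eq_zero_of_infinite_isRoot
  apply Set.Infinite.mono (s := Set.Icc (a - min e1 e2) a)
  · intro x hx
    have u1 := hb1 x ⟨le_trans (by linarith [min_le_left e1 e2]) hx.1, hx.2⟩
    have u2 := hb2 x ⟨le_trans (by linarith [min_le_right e1 e2]) hx.1, hx.2⟩
    rw [eval_neg] at u2
    simp only [Set.mem_setOf_eq, IsRoot.def]
    linarith
  · exact Set.Icc_infinite (by simp [lt_min he1 he2])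

lemma isOrdering_of {Q : Set (Polynomial ℝ)}
    (hadd : ∀ f ∈ Q, ∀ g ∈ Q, f + g ∈ Q) (hmul : ∀ f ∈ Q, ∀ g ∈ Q, f * g ∈ Q)
    (htot : ∀ f : Polynomial ℝ, f ∈ Q ∨ -f ∈ Q) (h0 : (0 : Polynomial ℝ) ∈ Q)
    (hsupp : ∀ f, f ∈ Q → -f ∈ Q → f = 0) : IsOrderingP Q := by
  refine ⟨hadd, hmul, htot, ⊥, Ideal.bot_prime, fun f => ?_⟩
  rw [Ideal.mem_bot]
  constructor
  · rintro rfl; exact ⟨h0, by rw [neg_zero]; exact h0⟩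
  · rintro ⟨h1, h2⟩; exact hsupp f h1 h2

lemma isOrdering_Pa (a : ℝ) : IsOrderingP (Pa a) := by
  refine ⟨fun f hf g hg => ?_, fun f hf g hg => ?_, fun f => ?_,
    RingHom.ker (evalRingHom a), RingHom.ker_isPrime _, fun f => ?_⟩
  · show 0 ≤ (f + g).eval a
    rw [eval_add]; exact add_nonneg hf hg
  · show 0 ≤ (f * g).eval a
    rw [eval_mul]; exact mul_nonneg hf hg
  · rcases le_total 0 (f.eval a) with h | h
    · exact Or.inl h
    · right; show 0 ≤ (-f).eval a; rw [eval_neg]; linarith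
  · rw [RingHom.mem_ker, coe_evalRingHom]
    constructor
    · intro h
      exact ⟨le_of_eq h.symm, by show 0 ≤ (-f).eval a; rw [eval_neg, h]; simp⟩
    · rintro ⟨h1, h2⟩
      have h1' : 0 ≤ f.eval a := h1
      have h2' : 0 ≤ (-f).eval a := h2
      rw [eval_neg] at h2'
      linarith

lemma isOrdering_PaPlus (a : ℝ) : IsOrderingP (PaPlus a) := by
  apply isOrdering_of ?_ ?_ (PaPlus_total a) (zero_mem_PaPlus a) (fun f => PaPlus_support)
  · rintro f ⟨e1, he1, hb1⟩ g ⟨e2, he2, hb2⟩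
    refine ⟨min e1 e2, lt_min he1 he2, fun x hx => ?_⟩
    rw [eval_add]
    have u1 := hb1 x ⟨hx.1, le_trans hx.2 (by linarith [min_le_left e1 e2])⟩
    have u2 := hb2 x ⟨hx.1, le_trans hx.2 (by linarith [min_le_right e1 e2])⟩
    linarith
  · rintro f ⟨e1, he1, hb1⟩ g ⟨e2, he2, hb2⟩
    refine ⟨min e1 e2, lt_min he1 he2, fun x hx => ?_⟩
    rw [eval_mul]
    have u1 := hb1 x ⟨hx.1, le_trans hx.2 (by linarith [min_le_left e1 e2])⟩
    have u2 := hb2 x ⟨hx.1, le_trans hx.2 (by linarith [min_le_right e1 e2])⟩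
    exact mul_nonneg u1 u2

lemma isOrdering_PaMinus (a : ℝ) : IsOrderingP (PaMinus a) := by
  apply isOrdering_of ?_ ?_ (PaMinus_total a) (zero_mem_PaMinus a) (fun f => PaMinus_support)
  · rintro f ⟨e1, he1, hb1⟩ g ⟨e2, he2, hb2⟩
    refine ⟨min e1 e2, lt_min he1 he2, fun x hx => ?_⟩
    rw [eval_add]
    have u1 := hb1 x ⟨le_trans (by linarith [min_le_left e1 e2]) hx.1, hx.2⟩
    have u2 := hb2 x ⟨le_trans (by linarith [min_le_right e1 e2]) hx.1, hx.2⟩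
    linarith
  · rintro f ⟨e1, he1, hb1⟩ g ⟨e2, he2, hb2⟩
    refine ⟨min e1 e2, lt_min he1 he2, fun x hx => ?_⟩
    rw [eval_mul]
    have u1 := hb1 x ⟨le_trans (by linarith [min_le_left e1 e2]) hx.1, hx.2⟩
    have u2 := hb2 x ⟨le_trans (by linarith [min_le_right e1 e2]) hx.1, hx.2⟩
    exact mul_nonneg u1 u2

lemma isOrdering_Pinf : IsOrderingP Pinf := by
  apply isOrdering_of ?_ ?_ Pinf_total zero_mem_Pinf (fun f => Pinf_support)
  · rintro f ⟨b1, hb1⟩ g ⟨b2, hb2⟩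
    refine ⟨max b1 b2, fun x hx => ?_⟩
    rw [eval_add]
    have u1 := hb1 x (le_trans (le_max_left _ _) hx)
    have u2 := hb2 x (le_trans (le_max_right _ _) hx)
    linarith
  · rintro f ⟨b1, hb1⟩ g ⟨b2, hb2⟩
    refine ⟨max b1 b2, fun x hx => ?_⟩
    rw [eval_mul]
    exact mul_nonneg (hb1 x (le_trans (le_max_left _ _) hx))
      (hb2 x (le_trans (le_max_right _ _) hx))

lemma isOrdering_PnegInf : IsOrderingP PnegInf := by
  apply isOrdering_of ?_ ?_ PnegInf_total zero_mem_PnegInf (fun f => PnegInf_support)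
  · rintro f ⟨b1, hb1⟩ g ⟨b2, hb2⟩
    refine ⟨min b1 b2, fun x hx => ?_⟩
    rw [eval_add]
    have u1 := hb1 x (le_trans hx (min_le_left _ _))
    have u2 := hb2 x (le_trans hx (min_le_right _ _))
    linarith
  · rintro f ⟨b1, hb1⟩ g ⟨b2, hb2⟩
    refine ⟨min b1 b2, fun x hx => ?_⟩
    rw [eval_mul]
    exact mul_nonneg (hb1 x (le_trans hx (min_le_left _ _)))
      (hb2 x (le_trans hx (min_le_right _ _)))

theorem classify (P : Set (Polynomial ℝ)) (hP : IsOrderingP P) :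
    (∃ a : ℝ, P = Pa a ∨ P = PaPlus a ∨ P = PaMinus a) ∨ P = Pinf ∨ P = PnegInf := by
  obtain ⟨hadd, hmul, htot, I, hIprime, hIiff⟩ := hP
  have hC : Cone P := ⟨hadd, hmul, htot⟩
  have hIsub : ∀ f ∈ I, f ∈ P := fun f hf => ((hIiff f).mp hf).1
  have hIneg : ∀ f ∈ I, -f ∈ P := fun f hf => ((hIiff f).mp hf).2
  have honeI : (1 : Polynomial ℝ) ∉ I := fun h =>
    hIprime.ne_top ((Ideal.eq_top_iff_one _).mpr h)
  have hone : (-1 : Polynomial ℝ) ∉ P := fun h =>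
    honeI ((hIiff 1).mpr ⟨hC.one_mem, by simpa using h⟩)
  by_cases hXa : ∃ a : ℝ, X - C a ∈ I
  · -- P = Pa a
    obtain ⟨a, ha⟩ := hXa
    have hIker : ∀ f ∈ I, f.eval a = 0 := by
      intro f hf
      by_contra hne
      obtain ⟨u, hu⟩ : (X - C a) ∣ (f - C (f.eval a)) := dvd_iff_isRoot.mpr (by simp)
      have h1 : f - C (f.eval a) ∈ I := by rw [hu]; exact Ideal.mul_mem_right _ _ ha
      have h2 : C (f.eval a) ∈ I := by
        have := I.sub_mem hf h1; simpa using this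
      apply honeI
      have h3 := I.mul_mem_left (C (f.eval a)⁻¹) h2
      rwa [← C_mul, inv_mul_cancel₀ hne, C_1] at h3
    have hL : ∀ r : ℝ, r < a → X - C r ∈ P := by
      intro r hr
      have e : (X : Polynomial ℝ) - C r = (X - C a) + C (a - r) := by rw [C_sub]; ring
      rw [e]; exact hadd _ (hIsub _ ha) _ (hC.C_mem (by linarith))
    have hR : ∀ r : ℝ, a < r → C r - X ∈ P := by
      intro r hr
      have e : C r - (X : Polynomial ℝ) = -(X - C a) + C (r - a) := by rw [C_sub]; ring
      rw [e]; exact hadd _ (hIneg _ ha) _ (hC.C_mem (by linarith))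
    left
    refine ⟨a, Or.inl ?_⟩
    ext f
    simp only [Pa, Set.mem_setOf_eq]
    constructor
    · intro hf
      by_contra hneg
      push_neg at hneg
      have h1 : (-f) ∈ P := hC.memC a hL hR (-f) (by rw [eval_neg]; linarith)
      have h2 : f ∈ I := (hIiff f).mpr ⟨hf, h1⟩
      have := hIker f h2
      linarith
    · intro hf
      rcases eq_or_lt_of_le hf with heq | hlt
      · obtain ⟨u, hu⟩ : (X - C a) ∣ f := dvd_iff_isRoot.mpr heq.symm
        exact hIsub f (by rw [hu]; exact Ideal.mul_mem_right _ _ ha)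
      · exact hC.memC a hL hR f hlt
  · -- support is trivial
    push_neg at hXa
    have htriv : ∀ g ∈ I, g = 0 := by
      suffices H : ∀ n : ℕ, ∀ g ∈ I, g.natDegree ≤ n → g = 0 from
        fun g hg => H g.natDegree g hg le_rfl
      intro n
      induction n using Nat.strong_induction_on with
      | _ n IH =>
      intro g hg hdeg
      by_cases h0 : g.natDegree = 0
      · obtain ⟨c, hc⟩ : ∃ c : ℝ, g = C c := ⟨g.coeff 0, eq_C_of_natDegree_eq_zero h0⟩
        subst hc
        by_contra hne
        have hcne : c ≠ 0 := fun h => hne (by rw [h, C_0])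
        apply honeI
        have h3 := I.mul_mem_left (C c⁻¹) hg
        rwa [← C_mul, inv_mul_cancel₀ hcne, C_1] at h3
      by_contra hne
      by_cases hroot : ∃ r : ℝ, g.eval r = 0
      · obtain ⟨r, hr⟩ := hroot
        obtain ⟨h, hh⟩ := dvd_iff_isRoot.mpr hr
        rcases hIprime.mem_or_mem (hh ▸ hg) with hmem | hmem
        · exact hXa r hmem
        · have hhne : h ≠ 0 := fun h0' => hne (by rw [hh, h0', mul_zero])
          have e : g.natDegree = 1 + h.natDegree := by
            rw [hh, natDegree_mul (X_sub_C_ne_zero r) hhne, natDegree_X_sub_C]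
          exact hhne (IH h.natDegree (by omega) h hmem le_rfl)
      · push_neg at hroot
        obtain ⟨s, t, u, ht, hgu⟩ := exists_quad_factor h0 hroot
        rcases hIprime.mem_or_mem (hgu ▸ hg) with hmem | hmem
        · apply absurd (?_ : (-1 : Polynomial ℝ) ∈ P) hone
          set v : Polynomial ℝ := (X - C s) * C (Real.sqrt t⁻¹) with hv
          have hsq : v * v = ((X - C s) ^ 2) * C t⁻¹ := by
            rw [hv, show (X - C s) * C (Real.sqrt t⁻¹) * ((X - C s) * C (Real.sqrt t⁻¹))
              = (X - C s) ^ 2 * (C (Real.sqrt t⁻¹) * C (Real.sqrt t⁻¹)) from by ring,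
              ← C_mul, Real.mul_self_sqrt (by positivity)]
          have hqI : ((X - C s) ^ 2 + C t) * C t⁻¹ ∈ I := Ideal.mul_mem_right _ _ hmem
          have hexp : ((X - C s) ^ 2 + C t) * C t⁻¹ = v * v + 1 := by
            rw [add_mul, ← hsq, ← C_mul, mul_inv_cancel₀ ht.ne', C_1]
          rw [hexp] at hqI
          have h1 : v * v ∈ P := hC.sq_mem v
          have h2 : -(v * v + 1) ∈ P := hIneg _ hqI
          have e : (-1 : Polynomial ℝ) = v * v + -(v * v + 1) := by ring
          rw [e]
          exact hadd _ h1 _ h2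
        · have hune : u ≠ 0 := fun h0' => hne (by rw [hgu, h0', mul_zero])
          have e : g.natDegree = 2 + u.natDegree := by
            rw [hgu, natDegree_mul (quad_ne_zero s t) hune, quad_natDegree]
          exact hune (IH u.natDegree (by omega) u hmem le_rfl)
    -- equality from one inclusion
    have heq : ∀ Q : Set (Polynomial ℝ), (∀ f : Polynomial ℝ, f ∈ Q ∨ -f ∈ Q) →
        (0 : Polynomial ℝ) ∈ Q → Q ⊆ P → P = Q := by
      intro Q hQtot hQ0 hsub
      apply Set.Subset.antisymm ?_ hsub
      intro f hf
      rcases hQtot f with h | h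
      · exact h
      · have : f ∈ I := (hIiff f).mpr ⟨hf, hsub h⟩
        rw [htriv f this]
        exact hQ0
    set L : Set ℝ := {c | X - C c ∈ P} with hLdef
    have halt : ∀ c : ℝ, c ∉ L → C c - X ∈ P := by
      intro c hc
      rcases htot (X - C c) with h | h
      · exact absurd h hc
      · rwa [show C c - (X : Polynomial ℝ) = -(X - C c) from by ring]
    have hdown : ∀ c ∈ L, ∀ c' ≤ c, c' ∈ L := by
      intro c hc c' hc'
      show X - C c' ∈ P
      rw [show (X : Polynomial ℝ) - C c' = (X - C c) + C (c - c') from by rw [C_sub]; ring]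
      exact hadd _ hc _ (hC.C_mem (by linarith))
    by_cases hall : ∀ c : ℝ, c ∈ L
    · right; left
      apply heq Pinf Pinf_total zero_mem_Pinf
      intro f hf
      by_cases hf0 : f = 0
      · rw [hf0]; exact hC.zero_mem
      · exact hC.memA hall f ((mem_Pinf_lc hf).lt_of_ne' (leadingCoeff_ne_zero.mpr hf0))
    by_cases hnone : ∀ c : ℝ, c ∉ L
    · right; right
      apply heq PnegInf PnegInf_total zero_mem_PnegInf
      intro f hf
      by_cases hf0 : f = 0
      · rw [hf0]; exact hC.zero_mem
      set Q : Set (Polynomial ℝ) := {h | h.comp (-X) ∈ P} with hQ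
      have hQC : Cone Q := by
        refine ⟨fun u hu v hv => ?_, fun u hu v hv => ?_, fun u => ?_⟩
        · show (u + v).comp (-X) ∈ P
          rw [add_comp]; exact hadd _ hu _ hv
        · show (u * v).comp (-X) ∈ P
          rw [mul_comp]; exact hmul _ hu _ hv
        · rcases htot (u.comp (-X)) with h | h
          · exact Or.inl h
          · right; show (-u).comp (-X) ∈ P; rwa [neg_comp]
      have hQT : ∀ c : ℝ, (X : Polynomial ℝ) - C c ∈ Q := by
        intro c
        show ((X : Polynomial ℝ) - C c).comp (-X) ∈ P
        rw [show ((X : Polynomial ℝ) - C c).comp (-X) = C (-c) - X from by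
          rw [sub_comp, X_comp, C_comp, map_neg]; ring]
        exact halt (-c) (hnone (-c))
      have hg : f.comp (-X) ∈ Pinf := mem_PnegInf_iff.mp hf
      have hgne : f.comp (-X) ≠ 0 := fun h =>
        hf0 (by rw [← comp_negX_comp_negX f, h, zero_comp])
      have hmem : f.comp (-X) ∈ Q :=
        hQC.memA hQT _ ((mem_Pinf_lc hg).lt_of_ne' (leadingCoeff_ne_zero.mpr hgne))
      have : (f.comp (-X)).comp (-X) ∈ P := hmem
      rwa [comp_negX_comp_negX] at this
    push_neg at hall hnone
    obtain ⟨d, hd⟩ := hall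
    obtain ⟨c0, hc0⟩ := hnone
    have hbdd : BddAbove L := by
      refine ⟨d, fun b hb => ?_⟩
      by_contra hbd
      push_neg at hbd
      exact hd (hdown b hb d hbd.le)
    set a := sSup L with ha
    have hL' : ∀ r : ℝ, r < a → X - C r ∈ P := by
      intro r hr
      obtain ⟨c, hcL, hrc⟩ := exists_lt_of_lt_csSup ⟨c0, hc0⟩ hr
      exact hdown c hcL r hrc.le
    have hR' : ∀ r : ℝ, a < r → C r - X ∈ P := by
      intro r hr
      apply halt
      intro hrL
      exact absurd (le_csSup hbdd hrL) (not_le.mpr hr)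
    left
    refine ⟨a, ?_⟩
    by_cases haL : X - C a ∈ P
    · right; left
      apply heq _ (PaPlus_total a) (zero_mem_PaPlus a)
      intro f hf
      by_cases hf0 : f = 0
      · rw [hf0]; exact hC.zero_mem
      obtain ⟨k, g, hga, hfg⟩ := decomp hf0 a
      have hgpos := PaPlus_g_pos hf hfg hga
      rw [hfg]
      exact hmul _ (hC.pow_mem haL k) _ (hC.memC a hL' hR' g hgpos)
    · right; right
      have haL' : C a - X ∈ P := halt a haL
      apply heq _ (PaMinus_total a) (zero_mem_PaMinus a)
      intro f hf
      by_cases hf0 : f = 0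
      · rw [hf0]; exact hC.zero_mem
      obtain ⟨k, g, hga, hfg⟩ := decomp' hf0 a
      have hgpos := PaMinus_g_pos hf hfg hga
      rw [hfg]
      exact hmul _ (hC.pow_mem haL' k) _ (hC.memC a hL' hR' g hgpos)


end StmtSix

/-- Classification of the orderings of `ℝ[T]`: each of `P_a`, `P_{a+}`, `P_{a-}`,
`P_∞`, `P_{-∞}` is an ordering, and every ordering of `ℝ[T]` is one of them. -/
theorem stmt_6 :
    (∀ a : ℝ, IsOrderingP (Pa a) ∧ IsOrderingP (PaPlus a) ∧ IsOrderingP (PaMinus a)) ∧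
    IsOrderingP Pinf ∧ IsOrderingP PnegInf ∧
    (∀ P : Set (Polynomial ℝ), IsOrderingP P →
      (∃ a : ℝ, P = Pa a ∨ P = PaPlus a ∨ P = PaMinus a) ∨ P = Pinf ∨ P = PnegInf) := by
  exact ⟨fun a => ⟨StmtSix.isOrdering_Pa a, StmtSix.isOrdering_PaPlus a, StmtSix.isOrdering_PaMinus a⟩,
    StmtSix.isOrdering_Pinf, StmtSix.isOrdering_PnegInf, StmtSix.classify⟩
end

section
/- Let K be a real closed field with a nontrivial non-archimedean absolute value compatible with its order, and let S ⊆ Kⁿ be a semialgebraic set. For σ ∈ {1,−1,0}ⁿ, let S^σ = { x ∈ S : sgn(x_i) = σ_i for all i }, and let trop_r : Kⁿ → ℝⁿ, x ↦ (sgn(x_1)|x_1|, …, sgn(x_n)|x_n|). Then trop_r(S^σ) = trop_r(cl(S^σ)) ∩ ℝ^σ, where cl denotes closure in the order topology of Kⁿ and ℝ^σ = { y ∈ ℝⁿ : sgn(y_i) = σ_i }. -/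
/-- The sign of an element of a linearly ordered field, as a real number. -/
noncomputable def sgnR {K : Type*} [Field K] [LinearOrder K] [IsStrictOrderedRing K] (x : K) : ℝ :=
  if 0 < x then 1 else if x < 0 then -1 else 0

/-- Semialgebraic subsets of `Kⁿ`: finite boolean combinations of sets
`{x : f(x) > 0}` for polynomials `f`. -/
inductive IsSA {K : Type*} [Field K] [LinearOrder K] [IsStrictOrderedRing K] {n : ℕ} : Set (Fin n → K) → Prop
  | basic (f : MvPolynomial (Fin n) K) : IsSA {x | 0 < MvPolynomial.eval x f}
  | compl {s : Set (Fin n → K)} : IsSA s → IsSA sᶜ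
  | union {s t : Set (Fin n → K)} : IsSA s → IsSA t → IsSA (s ∪ t)

lemma sgnR_eq_zero_iff {K : Type*} [Field K] [LinearOrder K] [IsStrictOrderedRing K] (a : K) :
    sgnR a = 0 ↔ a = 0 := by
  unfold sgnR
  split_ifs with h1 h2
  · exact iff_of_false one_ne_zero (by linarith)
  · exact iff_of_false (by norm_num) (by linarith)
  · exact iff_of_true rfl (le_antisymm (not_lt.mp h1) (not_lt.mp h2))

lemma sgnR_mul_nonneg {K : Type*} [Field K] [LinearOrder K] [IsStrictOrderedRing K] (a : K) (t : ℝ)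
    (ht : 0 < t) : sgnR (sgnR a * t) = sgnR a := by
  unfold sgnR
  rcases lt_trichotomy 0 a with h | h | h
  · rw [if_pos h, one_mul, if_pos ht]
  · subst h
    norm_num
  · rw [if_neg (by linarith : ¬ (0:K) < a), if_pos h, neg_one_mul,
      if_neg (by linarith : ¬ (0:ℝ) < -t), if_pos (by linarith : -t < 0)]

/-- For a semialgebraic `S ⊆ Kⁿ` over a real closed field `K` with a nontrivial
compatible non-archimedean absolute value, and a sign vector `σ`,
`trop_r(S^σ) = trop_r(cl(S^σ)) ∩ ℝ^σ`. -/
theorem stmt_9 {K : Type*} [Field K] [LinearOrder K] [IsStrictOrderedRing K] [TopologicalSpace K] [OrderTopology K]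
    (hsq : ∀ x : K, 0 ≤ x → ∃ y : K, y ^ 2 = x)
    (hodd : ∀ p : Polynomial K, Odd p.natDegree → ∃ x : K, p.eval x = 0)
    (v : K → ℝ)
    (hnonneg : ∀ a, 0 ≤ v a) (hzero : ∀ a, v a = 0 ↔ a = 0)
    (hmul : ∀ a b, v (a * b) = v a * v b)
    (hna : ∀ a b, v (a + b) ≤ max (v a) (v b))
    (hcomp : ∀ a b : K, 0 ≤ a → a ≤ b → v a ≤ v b)
    (hnt : ∃ a : K, v a ≠ 0 ∧ v a ≠ 1)
    {n : ℕ} (S : Set (Fin n → K)) (hS : IsSA S)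
    (σ : Fin n → ℝ) (hσ : ∀ i, σ i = 1 ∨ σ i = -1 ∨ σ i = 0) :
    let tropr : (Fin n → K) → (Fin n → ℝ) := fun x i => sgnR (x i) * v (x i)
    let Sσ : Set (Fin n → K) := {x | x ∈ S ∧ ∀ i, sgnR (x i) = σ i}
    let Rσ : Set (Fin n → ℝ) := {y | ∀ i, sgnR (y i) = σ i}
    tropr '' Sσ = (tropr '' closure Sσ) ∩ Rσ := by
  intro tropr Sσ Rσ
  -- basic facts about v
  have hvpos : ∀ a : K, a ≠ 0 → 0 < v a := fun a ha =>
    lt_of_le_of_ne (hnonneg a) (fun h => ha ((hzero a).mp h.symm))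
  have hv1 : v (1 : K) = 1 := by
    have h := hmul 1 1
    have h0 : v (1 : K) ≠ 0 := fun h => one_ne_zero ((hzero 1).mp h)
    rw [mul_one] at h
    have : v (1 : K) * v 1 = v 1 * 1 := by rw [mul_one]; linarith
    exact mul_left_cancel₀ h0 this
  have hvneg : ∀ a : K, v (-a) = v a := by
    have hm1 : v (-1 : K) = 1 := by
      have h := hmul (-1 : K) (-1)
      rw [neg_mul_neg, one_mul, hv1] at h
      nlinarith [hnonneg (-1 : K)]
    intro a
    have := hmul (-1) a
    rw [neg_one_mul, hm1, one_mul] at this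
    exact this
  -- ultrametric: dominant term
  have hult : ∀ a b : K, v b < v a → v (a + b) = v a := by
    intro a b h
    refine le_antisymm (le_trans (hna a b) (by rw [max_eq_left h.le])) ?_
    by_contra hc
    push_neg at hc
    have h2 : v a ≤ max (v (a + b)) (v (-b)) := by
      have := hna (a + b) (-b)
      simpa using this
    rw [hvneg] at h2
    rcases max_cases (v (a + b)) (v b) with ⟨he, _⟩ | ⟨he, _⟩ <;> rw [he] at h2 <;> linarith
  -- v of things bounded in absolute value
  have hvle : ∀ (a ε : K), -ε ≤ a → a ≤ ε → v a ≤ v ε := by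
    intro a ε h1 h2
    rcases le_or_gt 0 a with h | h
    · exact hcomp a ε h h2
    · rw [← hvneg a]
      exact hcomp (-a) ε (by linarith) (by linarith)
  -- existence of elements of small positive valuation
  have hsmall : ∀ δ : ℝ, 0 < δ → ∃ ε : K, 0 < ε ∧ v ε < δ := by
    intro δ hδ
    obtain ⟨a, ha0, ha1⟩ := hnt
    have haz : a ≠ 0 := fun h => ha0 (by rw [h]; exact (hzero 0).mpr rfl)
    have hinv : v a * v a⁻¹ = 1 := by
      rw [← hmul, mul_inv_cancel₀ haz, hv1]
    obtain ⟨c, hcz, hc1⟩ : ∃ c : K, c ≠ 0 ∧ v c < 1 := by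
      rcases lt_or_gt_of_ne ha1 with h | h
      · exact ⟨a, haz, h⟩
      · refine ⟨a⁻¹, inv_ne_zero haz, ?_⟩
        have hpos := hvpos a haz
        have : v a⁻¹ = (v a)⁻¹ := by field_simp at hinv ⊢; linarith
        rw [this]
        exact inv_lt_one_of_one_lt₀ h
    have hvabs : v |c| = v c := by
      rcases abs_choice c with h | h <;> rw [h]
      exact hvneg c
    have hvpow : ∀ k : ℕ, v (|c| ^ k) = (v c) ^ k := by
      intro k
      induction k with
      | zero => simpa using hv1
      | succ m ih => rw [pow_succ, pow_succ, hmul, ih, hvabs]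
    obtain ⟨k, hk⟩ := exists_pow_lt_of_lt_one hδ hc1
    exact ⟨|c| ^ k, pow_pos (abs_pos.mpr hcz) k, by rw [hvpow]; exact hk⟩
  -- the two inclusions
  ext y
  constructor
  · rintro ⟨x, hx, rfl⟩
    refine ⟨⟨x, subset_closure hx, rfl⟩, fun i => ?_⟩
    show sgnR (sgnR (x i) * v (x i)) = σ i
    rcases eq_or_ne (x i) 0 with h | h
    · rw [← hx.2 i, h]
      simp [sgnR]
    · rw [sgnR_mul_nonneg _ _ (hvpos _ h)]
      exact hx.2 i
  · rintro ⟨⟨x, hx, rfl⟩, hy⟩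
    have hσx : ∀ i, x i ≠ 0 → sgnR (x i) = σ i := by
      intro i h
      rw [← hy i]
      exact (sgnR_mul_nonneg _ _ (hvpos _ h)).symm
    have hσ0 : ∀ i, x i = 0 → σ i = 0 := by
      intro i h
      rw [← hy i]
      show sgnR (sgnR (x i) * v (x i)) = 0
      rw [h, (hzero 0).mpr rfl, mul_zero]
      simp [sgnR]
    -- lower bound δ for valuations of nonzero coordinates
    obtain ⟨δ, hδ0, hδ⟩ : ∃ δ : ℝ, 0 < δ ∧ ∀ i, x i ≠ 0 → δ ≤ v (x i) := by
      by_cases hn : Nonempty (Fin n)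
      · set g : Fin n → ℝ := fun i => if x i = 0 then 1 else v (x i) with hg
        refine ⟨Finset.univ.inf' Finset.univ_nonempty g, ?_, ?_⟩
        · rw [Finset.lt_inf'_iff]
          intro i _
          by_cases h : x i = 0 <;> simp only [hg, h, if_true, if_false] <;>
            [norm_num; exact hvpos _ h]
        · intro i h
          have := Finset.inf'_le g (Finset.mem_univ i)
          simpa only [hg, h, if_false] using this
      · exact ⟨1, one_pos, fun i => absurd ⟨i⟩ hn⟩
    obtain ⟨ε, hε0, hεδ⟩ := hsmall δ hδ0
    -- open box around x
    set U : Set (Fin n → K) := Set.univ.pi fun i => Set.Ioo (x i - ε) (x i + ε) with hU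
    have hUopen : IsOpen U := isOpen_set_pi Set.finite_univ fun i _ => isOpen_Ioo
    have hxU : x ∈ U := fun i _ => ⟨by linarith, by linarith⟩
    obtain ⟨z, hzU, hzS⟩ := mem_closure_iff.mp hx U hUopen hxU
    refine ⟨z, hzS, ?_⟩
    funext i
    show sgnR (z i) * v (z i) = sgnR (x i) * v (x i)
    rcases eq_or_ne (x i) 0 with h | h
    · have hz0 : z i = 0 := by
        have : sgnR (z i) = 0 := by rw [hzS.2 i, hσ0 i h]
        exact (sgnR_eq_zero_iff _).mp this
      rw [h, hz0]
    · have hbox := hzU i (Set.mem_univ i)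
      have hdiff : v (z i - x i) ≤ v ε :=
        hvle _ _ (by cases hbox; linarith) (by cases hbox; linarith)
      have hlt : v (z i - x i) < v (x i) :=
        lt_of_le_of_lt hdiff (lt_of_lt_of_le hεδ (hδ i h))
      have hvz : v (z i) = v (x i) := by
        have := hult (x i) (z i - x i) hlt
        rwa [add_sub_cancel] at this
      rw [hvz, hzS.2 i, hσx i h]
end

section
/- Let K be an ordered field with a compatible non-archimedean absolute value and let A be a commutative K-algebra generated by f_1, …, f_n. Identify the set M_r(A) of signed K-seminorms on A with a subset of the product ∏_{f ∈ A} ℝ via x ↦ (|f|ˢ_x)_{f ∈ A}, with the product topology. Then for any compact B ⊆ ℝⁿ, the set { x ∈ M_r(A) : (|f_1|ˢ_x, …, |f_n|ˢ_x) ∈ B } is compact. In other words, the tropicalization map M_r(A) → ℝⁿ, x ↦ (|f_i|ˢ_x)_i, is proper. -/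
/-- A signed `K`-seminorm on a `K`-algebra `A`, for `K` an ordered field with
absolute value `v`. -/
def IsSignedSeminormK {K A : Type*} [Field K] [LinearOrder K] [IsStrictOrderedRing K] [CommRing A] [Algebra K A]
    (v : K → ℝ) (s : A → ℝ) : Prop :=
  (∀ a : K, s (algebraMap K A a) = sgnR a * v a) ∧
  (∀ f g : A, s (f * g) = s f * s g) ∧
  (∀ f g : A, min (s f) (s g) ≤ s (f + g) ∧ s (f + g) ≤ max (s f) (s g))

/-- If `f₁, …, fₙ` generate the `K`-algebra `A`, then the tropicalization map
`M_r(A) → ℝⁿ`, `x ↦ (|fᵢ|ˢ_x)ᵢ`, is proper: the preimage of any compact `B ⊆ ℝⁿ`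
is compact (with `M_r(A)` topologized as a subspace of `∏_{f ∈ A} ℝ`). -/
theorem stmt_12 {K A : Type*} [Field K] [LinearOrder K] [IsStrictOrderedRing K] [CommRing A] [Algebra K A]
    (v : K → ℝ)
    (hnonneg : ∀ a, 0 ≤ v a)
    (hmul : ∀ a b, v (a * b) = v a * v b)
    (hna : ∀ a b, v (a + b) ≤ max (v a) (v b))
    (hcomp : ∀ a b : K, 0 ≤ a → a ≤ b → v a ≤ v b)
    (n : ℕ) (f : Fin n → A) (hgen : Algebra.adjoin K (Set.range f) = ⊤)
    (B : Set (Fin n → ℝ)) (hB : IsCompact B) :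
    IsCompact {s : A → ℝ | IsSignedSeminormK v s ∧ (fun i => s (f i)) ∈ B} := by
  set S : Set (A → ℝ) := {s : A → ℝ | IsSignedSeminormK v s ∧ (fun i => s (f i)) ∈ B} with hS
  -- The set is closed
  have hclosed : IsClosed S := by
    have h1 : IsClosed {s : A → ℝ | IsSignedSeminormK v s} := by
      have : {s : A → ℝ | IsSignedSeminormK v s} =
          (⋂ a : K, {s : A → ℝ | s (algebraMap K A a) = sgnR a * v a}) ∩
          ((⋂ g : A, ⋂ h : A, {s : A → ℝ | s (g * h) = s g * s h}) ∩
           (⋂ g : A, ⋂ h : A,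
              ({s : A → ℝ | min (s g) (s h) ≤ s (g + h)} ∩
               {s : A → ℝ | s (g + h) ≤ max (s g) (s h)}))) := by
        ext s
        simp only [IsSignedSeminormK, Set.mem_setOf_eq, Set.mem_inter_iff, Set.mem_iInter,
          forall_and]
      rw [this]
      refine IsClosed.inter (isClosed_iInter fun a => isClosed_eq (continuous_apply _)
          continuous_const) (IsClosed.inter ?_ ?_)
      · exact isClosed_iInter fun g => isClosed_iInter fun h =>
          isClosed_eq (continuous_apply _) ((continuous_apply g).mul (continuous_apply h))
      · refine isClosed_iInter fun g => isClosed_iInter fun h => IsClosed.inter ?_ ?_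
        · exact isClosed_le ((continuous_apply g).min (continuous_apply h)) (continuous_apply _)
        · exact isClosed_le (continuous_apply _) ((continuous_apply g).max (continuous_apply h))
    have h2 : IsClosed {s : A → ℝ | (fun i => s (f i)) ∈ B} :=
      hB.isClosed.preimage (continuous_pi fun i => continuous_apply _)
    exact h1.inter h2
  -- Bound from B
  obtain ⟨R, hR⟩ : ∃ R : ℝ, ∀ y ∈ B, ‖y‖ ≤ R := hB.isBounded.exists_norm_le
  -- Pointwise bound for every g : A
  have hBd : ∀ g : A, ∃ C : ℝ, 0 ≤ C ∧ ∀ s ∈ S, |s g| ≤ C := by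
    intro g
    have hg : g ∈ Algebra.adjoin K (Set.range f) := hgen ▸ Algebra.mem_top
    induction hg using Algebra.adjoin_induction with
    | mem x hx =>
      obtain ⟨i, rfl⟩ := hx
      refine ⟨max 0 R, le_max_left _ _, fun s hs => ?_⟩
      have := hR _ hs.2
      calc |s (f i)| = ‖(fun j => s (f j)) i‖ := rfl
        _ ≤ ‖fun j => s (f j)‖ := norm_le_pi_norm (fun j => s (f j)) i
        _ ≤ R := this
        _ ≤ max 0 R := le_max_right _ _
    | algebraMap a =>
      refine ⟨v a, hnonneg a, fun s hs => ?_⟩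
      rw [hs.1.1 a, abs_mul]
      have h1 : |sgnR a| ≤ 1 := by
        unfold sgnR; split_ifs <;> simp
      calc |sgnR a| * |v a| ≤ 1 * |v a| := by
            exact mul_le_mul_of_nonneg_right h1 (abs_nonneg _)
        _ = v a := by rw [one_mul, abs_of_nonneg (hnonneg a)]
    | add x y hx hy ihx ihy =>
      obtain ⟨C₁, hC₁, h₁⟩ := ihx
      obtain ⟨C₂, hC₂, h₂⟩ := ihy
      refine ⟨max C₁ C₂, le_max_of_le_left hC₁, fun s hs => ?_⟩
      obtain ⟨hmin, hmax⟩ := hs.1.2.2 x y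
      have hx1 := abs_le.mp (h₁ s hs)
      have hy1 := abs_le.mp (h₂ s hs)
      rw [abs_le]
      constructor
      · refine le_trans ?_ hmin
        refine le_min (le_trans ?_ hx1.1) (le_trans ?_ hy1.1)
        · exact neg_le_neg (le_max_left _ _)
        · exact neg_le_neg (le_max_right _ _)
      · exact hmax.trans (max_le_max hx1.2 hy1.2)
    | mul x y hx hy ihx ihy =>
      obtain ⟨C₁, hC₁, h₁⟩ := ihx
      obtain ⟨C₂, hC₂, h₂⟩ := ihy
      refine ⟨C₁ * C₂, mul_nonneg hC₁ hC₂, fun s hs => ?_⟩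
      rw [hs.1.2.1 x y, abs_mul]
      exact mul_le_mul (h₁ s hs) (h₂ s hs) (abs_nonneg _) hC₁
  choose C hC0 hCle using hBd
  have hsub : S ⊆ Set.pi Set.univ fun g : A => Set.Icc (-(C g)) (C g) := by
    intro s hs g _
    exact abs_le.mp (hCle g s hs)
  exact (isCompact_univ_pi fun g => isCompact_Icc).of_isClosed_subset hclosed hsub
end

section
/- Define the real tropical hyperfield addition on ℝ by: a ⊕ b = a if |a| > |b|; a ⊕ b = b if |a| < |b|; a ⊕ b = {a} if a = b; and a ⊕ b = [−|a|, |a|] (the closed interval) if a = −b. Let K be an ordered field with a compatible non-archimedean absolute value and define τ : K → ℝ by τ(x) = sgn(x)·|x|. Then for all x, y ∈ K, τ(x + y) ∈ τ(x) ⊕ τ(y), and τ(x·y) = τ(x)·τ(y). -/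
/-- The (multivalued) addition of the real tropical hyperfield `ℝ𝕋`. -/
noncomputable def rtAdd (a b : ℝ) : Set ℝ :=
  if |b| < |a| then {a}
  else if |a| < |b| then {b}
  else if a = b then {a}
  else Set.Icc (-|a|) |a|

/-- For an ordered field `K` with compatible non-archimedean absolute value, the
signed value map `τ(x) = sgn(x)·|x|` is a hyperfield morphism `K → ℝ𝕋`:
`τ(x+y) ∈ τ(x) ⊕ τ(y)` and `τ(xy) = τ(x)·τ(y)`. -/
theorem stmt_14 {K : Type*} [Field K] [LinearOrder K] [IsStrictOrderedRing K] (v : K → ℝ)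
    (hnonneg : ∀ a, 0 ≤ v a) (hzero : ∀ a, v a = 0 ↔ a = 0)
    (hmul : ∀ a b, v (a * b) = v a * v b)
    (hna : ∀ a b, v (a + b) ≤ max (v a) (v b))
    (hcomp : ∀ a b : K, 0 ≤ a → a ≤ b → v a ≤ v b)
    (x y : K) :
    (sgnR (x + y) * v (x + y)) ∈ rtAdd (sgnR x * v x) (sgnR y * v y) ∧
    sgnR (x * y) * v (x * y) = (sgnR x * v x) * (sgnR y * v y) := by
  have hv1 : v (1 : K) = 1 := by
    have h := hmul 1 1
    simp only [mul_one] at h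
    have h0 : v (1 : K) ≠ 0 := by simp [hzero]
    have h2 : v (1 : K) * v 1 = 1 * v 1 := by linarith
    exact (mul_right_cancel₀ h0 h2)
  have hvneg : ∀ a : K, v (-a) = v a := by
    intro a
    have h1 : v (-1 : K) = 1 := by
      have h := hmul (-1 : K) (-1)
      simp only [neg_mul, one_mul, neg_neg, hv1] at h
      nlinarith [hnonneg (-1 : K)]
    have h := hmul (-1 : K) a
    simpa [h1] using h
  have habs : ∀ z : K, |sgnR z * v z| = v z := by
    intro z
    unfold sgnR
    rcases lt_trichotomy 0 z with hz | hz | hz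
    · simp [hz, abs_of_nonneg (hnonneg z)]
    · simp [← hz, (hzero (0:K)).mpr rfl]
    · simp [hz, not_lt.mpr hz.le, abs_of_nonneg (hnonneg z)]
  -- dominance lemma
  have key : ∀ a b : K, v b < v a → sgnR (a + b) * v (a + b) = sgnR a * v a := by
    intro a b h
    have hva : v (a + b) = v a := by
      have h1 := hna (a + b) (-b)
      rw [add_neg_cancel_right, hvneg] at h1
      have h2 := hna a b
      rcases le_max_iff.mp h1 with h1 | h1
      · exact le_antisymm (le_trans h2 (max_le le_rfl h.le)) h1
      · exact absurd h1 (not_le.mpr h)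
    have hane : a ≠ 0 := by
      intro h0
      rw [(hzero a).mpr h0] at h
      exact absurd (hnonneg b) (not_le.mpr h)
    rcases hane.lt_or_gt with ha | ha
    · -- a < 0, show a + b < 0
      have hab : a + b < 0 := by
        by_contra hc
        push_neg at hc
        have hle : -a ≤ b := by linarith
        have := hcomp (-a) b (by linarith) hle
        rw [hvneg] at this
        linarith
      unfold sgnR
      simp [hab, not_lt.mpr hab.le, ha, not_lt.mpr ha.le, hva]
    · -- 0 < a, show 0 < a + b
      have hab : 0 < a + b := by
        by_contra hc
        push_neg at hc
        have hle : a ≤ -b := by linarith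
        have := hcomp a (-b) ha.le hle
        rw [hvneg] at this
        linarith
      unfold sgnR
      simp [hab, ha, hva]
  constructor
  · rcases lt_trichotomy (v y) (v x) with h | h | h
    · have hlt : |sgnR y * v y| < |sgnR x * v x| := by rw [habs, habs]; exact h
      rw [rtAdd, if_pos hlt, key x y h]
      rfl
    · -- h : v y = v x
      rcases eq_or_ne x 0 with hx0 | hx0
      · have hy0 : y = 0 :=
          (hzero y).mp (by rw [h, hx0]; exact (hzero (0:K)).mpr rfl)
        subst hx0; subst hy0
        simp only [add_zero]
        rw [rtAdd]
        simp
      · have hy0 : y ≠ 0 := fun h0 => hx0 ((hzero x).mp (by rw [← h, (hzero y).mpr h0]))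
        have hvx0 : 0 < v x := (hnonneg x).lt_of_ne' (fun hh => hx0 ((hzero x).mp hh))
        have h2 := hna x y
        rw [h, max_self] at h2
        rcases hx0.lt_or_gt with hx | hx <;> rcases hy0.lt_or_gt with hy | hy
        · -- both negative
          have hsx : sgnR x = -1 := by
            unfold sgnR; rw [if_neg (not_lt.mpr hx.le), if_pos hx]
          have hsy : sgnR y = -1 := by
            unfold sgnR; rw [if_neg (not_lt.mpr hy.le), if_pos hy]
          have hab : x + y < 0 := by linarith
          have hvv : v (x + y) = v x := by
            have h1 : v x ≤ v (x + y) := by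
              have := hcomp (-x) (-(x + y)) (by linarith) (by linarith)
              rwa [hvneg, hvneg] at this
            exact le_antisymm h2 h1
          have heq : sgnR (x + y) * v (x + y) = sgnR x * v x := by
            unfold sgnR
            rw [if_neg (not_lt.mpr hab.le), if_pos hab, if_neg (not_lt.mpr hx.le),
              if_pos hx, hvv]
          have heq2 : sgnR x * v x = sgnR y * v y := by rw [hsx, hsy, h]
          rw [rtAdd, heq, ← heq2]
          simp
        · -- x < 0 < y : opposite signs
          have hsx : sgnR x = -1 := by
            unfold sgnR; rw [if_neg (not_lt.mpr hx.le), if_pos hx]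
          have hsy : sgnR y = 1 := by unfold sgnR; rw [if_pos hy]
          have hne : sgnR x * v x ≠ sgnR y * v y := by
            rw [hsx, hsy, h]; intro hc; linarith
          have hEq : |sgnR x * v x| = |sgnR y * v y| := by rw [habs, habs, h]
          rw [rtAdd, if_neg (by rw [hEq]; exact lt_irrefl _),
            if_neg (by rw [hEq]; exact lt_irrefl _), if_neg hne]
          rw [Set.mem_Icc, ← abs_le, habs, habs]
          exact h2
        · -- y < 0 < x : opposite signs
          have hsx : sgnR x = 1 := by unfold sgnR; rw [if_pos hx]
          have hsy : sgnR y = -1 := by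
            unfold sgnR; rw [if_neg (not_lt.mpr hy.le), if_pos hy]
          have hne : sgnR x * v x ≠ sgnR y * v y := by
            rw [hsx, hsy, h]; intro hc; linarith
          have hEq : |sgnR x * v x| = |sgnR y * v y| := by rw [habs, habs, h]
          rw [rtAdd, if_neg (by rw [hEq]; exact lt_irrefl _),
            if_neg (by rw [hEq]; exact lt_irrefl _), if_neg hne]
          rw [Set.mem_Icc, ← abs_le, habs, habs]
          exact h2
        · -- both positive
          have hsx : sgnR x = 1 := by unfold sgnR; rw [if_pos hx]
          have hsy : sgnR y = 1 := by unfold sgnR; rw [if_pos hy]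
          have hab : 0 < x + y := by linarith
          have hvv : v (x + y) = v x := by
            have h1 : v x ≤ v (x + y) := hcomp x (x + y) hx.le (by linarith)
            exact le_antisymm h2 h1
          have heq : sgnR (x + y) * v (x + y) = sgnR x * v x := by
            unfold sgnR
            rw [if_pos hab, if_pos hx, hvv]
          have heq2 : sgnR x * v x = sgnR y * v y := by rw [hsx, hsy, h]
          rw [rtAdd, heq, ← heq2]
          simp
    · have hlt : |sgnR x * v x| < |sgnR y * v y| := by rw [habs, habs]; exact h
      rw [rtAdd, if_neg (not_lt.mpr hlt.le), if_pos hlt, add_comm, key y x h]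
      rfl
  · have hsgn : sgnR (x * y) = sgnR x * sgnR y := by
      unfold sgnR
      rcases lt_trichotomy (0:K) x with hx | hx | hx <;>
        rcases lt_trichotomy (0:K) y with hy | hy | hy
      · rw [if_pos hx, if_pos hy, if_pos (mul_pos hx hy)]; norm_num
      · rw [← hy, mul_zero]; norm_num
      · have hp := mul_neg_of_pos_of_neg hx hy
        rw [if_pos hx, if_neg (lt_asymm hy), if_pos hy, if_neg (lt_asymm hp), if_pos hp]
        norm_num
      · rw [← hx, zero_mul]; norm_num
      · rw [← hx, zero_mul]; norm_num
      · rw [← hx, zero_mul]; norm_num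
      · have hp := mul_neg_of_neg_of_pos hx hy
        rw [if_neg (lt_asymm hx), if_pos hx, if_pos hy, if_neg (lt_asymm hp), if_pos hp]
        norm_num
      · rw [← hy, mul_zero]; norm_num
      · have hp := mul_pos_of_neg_of_neg hx hy
        rw [if_neg (lt_asymm hx), if_pos hx, if_neg (lt_asymm hy), if_pos hy, if_pos hp]
        norm_num
    rw [hmul, hsgn]
    ring
end

section
/- Let S be the complement of the positive orthant in Kⁿ (n ≥ 2), where K is a real closed field with a compatible non-archimedean absolute value whose signed value map is surjective onto ℝ. Let F be a real tropical polynomial over ℝ𝕋 (coefficients in ℝ, monomials with nonnegative integer exponents). If the set {F < 0} := { y ∈ ℝⁿ : F(y) is a single negative real number } is contained in the strictly positive orthant ℝ_{>0}ⁿ, then {F < 0} is empty. Concretely: if y ∈ ℝⁿ has all coordinates nonzero and the unique maximum-absolute-value term of F at y is c·y₁^{a₁}···y_n^{a_n} < 0, then at least one of the sign-flipped points obtained by negating some coordinates of y makes that same term positive while it remains the unique maximum in absolute value, so y cannot be forced into the positive orthant. -/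
/-- For `n ≥ 2`, if the set `{F < 0}` of points where a real tropical polynomial `F`
evaluates to a single negative number (unique term of maximal absolute value, negative)
is contained in the strictly positive orthant, then it is empty. -/
theorem stmt_15 (n : ℕ) (hn : 2 ≤ n) (c : (Fin n → ℕ) → ℝ)
    (hfin : {I : Fin n → ℕ | c I ≠ 0}.Finite) :
    let term : (Fin n → ℕ) → (Fin n → ℝ) → ℝ := fun I y => c I * ∏ i, (y i) ^ (I i)
    let Sneg : Set (Fin n → ℝ) :=
      {y | ∃ I : Fin n → ℕ, c I ≠ 0 ∧ term I y < 0 ∧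
        ∀ J : Fin n → ℕ, J ≠ I → c J ≠ 0 → |term J y| < |term I y|}
    Sneg ⊆ {y | ∀ i, 0 < y i} → Sneg = ∅ := by
  intro term Sneg hsub
  rw [Set.eq_empty_iff_forall_notMem]
  intro y hy
  obtain ⟨I, hcI, htI, hmax⟩ := hy
  have hypos : ∀ i, 0 < y i := hsub ⟨I, hcI, htI, hmax⟩
  have hi0 : 0 < n := by omega
  have hi1 : 1 < n := by omega
  set i0 : Fin n := ⟨0, hi0⟩
  set i1 : Fin n := ⟨1, hi1⟩
  have hne : i0 ≠ i1 := by simp [i0, i1, Fin.ext_iff]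
  have hfac : ∀ (σ : Fin n → ℝ) (J : Fin n → ℕ),
      term J (fun i => σ i * y i) = (∏ i, σ i ^ J i) * term J y := by
    intro σ J
    show c J * ∏ i, (σ i * y i) ^ J i = (∏ i, σ i ^ J i) * (c J * ∏ i, (y i) ^ J i)
    simp_rw [mul_pow]
    rw [Finset.prod_mul_distrib]
    ring
  have habs : ∀ (σ : Fin n → ℝ), (∀ i, |σ i| = 1) → ∀ J : Fin n → ℕ,
      |(∏ i, σ i ^ J i)| = 1 := by
    intro σ hσ J
    rw [Finset.abs_prod]
    simp_rw [abs_pow, hσ, one_pow]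
    simp
  have step : ∀ (σ : Fin n → ℝ), (∀ i, |σ i| = 1) →
      term I (fun i => σ i * y i) < 0 → ∀ i, 0 < σ i * y i := by
    intro σ hσ hneg
    apply hsub
    refine ⟨I, hcI, hneg, ?_⟩
    intro J hJ hcJ
    have key : ∀ K : Fin n → ℕ, |term K (fun i => σ i * y i)| = |term K y| := by
      intro K
      rw [hfac, abs_mul, habs σ hσ, one_mul]
    rw [key, key]
    exact hmax J hJ hcJ
  have esign : ∀ (σ : Fin n → ℝ), (∀ i, |σ i| = 1) →
      (∏ i, σ i ^ I i) = 1 ∨ (∏ i, σ i ^ I i) = -1 := by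
    intro σ hσ
    rcases (abs_eq (by norm_num : (0:ℝ) ≤ 1)).mp (habs σ hσ I) with h | h
    · exact Or.inl h
    · exact Or.inr h
  set σa : Fin n → ℝ := fun i => if i = i0 then -1 else 1 with hσadef
  set σb : Fin n → ℝ := fun i => if i = i1 then -1 else 1 with hσbdef
  have hσa : ∀ i, |σa i| = 1 := by
    intro i; by_cases h : i = i0 <;> simp [hσadef, h]
  have hσb : ∀ i, |σb i| = 1 := by
    intro i; by_cases h : i = i1 <;> simp [hσbdef, h]
  have hσa0 : σa i0 = -1 := by simp [hσadef]
  have hσb1 : σb i1 = -1 := by simp [hσbdef]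
  have hσb0 : σb i0 = 1 := by simp [hσbdef, hne]
  have ea : (∏ i, σa i ^ I i) = -1 := by
    rcases esign σa hσa with h | h
    · exfalso
      have hneg : term I (fun i => σa i * y i) < 0 := by
        rw [hfac, h, one_mul]; exact htI
      have h2 := step σa hσa hneg i0
      rw [hσa0] at h2
      linarith [hypos i0]
    · exact h
  have eb : (∏ i, σb i ^ I i) = -1 := by
    rcases esign σb hσb with h | h
    · exfalso
      have hneg : term I (fun i => σb i * y i) < 0 := by
        rw [hfac, h, one_mul]; exact htI
      have h2 := step σb hσb hneg i1
      rw [hσb1] at h2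
      linarith [hypos i1]
    · exact h
  set σc : Fin n → ℝ := fun i => σa i * σb i with hσcdef
  have hσc : ∀ i, |σc i| = 1 := by
    intro i
    rw [hσcdef]
    simp only [abs_mul, hσa i, hσb i, one_mul]
  have ec : (∏ i, σc i ^ I i) = 1 := by
    have : (∏ i, σc i ^ I i) = (∏ i, σa i ^ I i) * (∏ i, σb i ^ I i) := by
      rw [← Finset.prod_mul_distrib]
      simp_rw [hσcdef, mul_pow]
    rw [this, ea, eb]; norm_num
  have hneg : term I (fun i => σc i * y i) < 0 := by
    rw [hfac, ec, one_mul]; exact htI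
  have h2 := step σc hσc hneg i0
  have : σc i0 = -1 := by rw [hσcdef]; simp [hσa0, hσb0]
  rw [this] at h2
  linarith [hypos i0]
end

section
/- Let K be a real closed field with a nontrivial compatible non-archimedean absolute value, and let S = ⋂_{i=1}^m { x ∈ Kⁿ : f_i(x) ≤ 0 } for polynomials f_i ∈ K[x_1,…,x_n]. Then the set ( ⋂_i { y ∈ ℝⁿ : trop_r(f_i)(y) ≤ 0 } ) \ ( ⋂_i { y ∈ ℝⁿ : trop_r(f_i)(y) < 0 } ) is contained in ⋃_i { y ∈ ℝⁿ : 0 ∈ trop_r(f_i)(y) }, and each set { y : 0 ∈ trop_r(f_i)(y) } has empty interior in ℝⁿ (it is contained in the zero set of a finite union of real-algebraic conditions where two monomial terms have equal absolute values). -/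
/-- The signed value `τ(x) = sgn(x)·|x|`. -/
noncomputable def tau {K : Type*} [Field K] [LinearOrder K] [IsStrictOrderedRing K] (v : K → ℝ) (x : K) : ℝ :=
  sgnR x * v x

/-- The term of `trop_r(f)` with exponent `I`, evaluated at `y ∈ ℝⁿ`. -/
noncomputable def tterm {K : Type*} [Field K] [LinearOrder K] [IsStrictOrderedRing K] (v : K → ℝ) {n : ℕ}
    (f : MvPolynomial (Fin n) K) (I : Fin n →₀ ℕ) (y : Fin n → ℝ) : ℝ :=
  tau v (MvPolynomial.coeff I f) * ∏ j, (y j) ^ (I j)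

/-- The maximal absolute value of the terms of `trop_r(f)` at `y`. -/
noncomputable def maxAbs {K : Type*} [Field K] [LinearOrder K] [IsStrictOrderedRing K] (v : K → ℝ) {n : ℕ}
    (f : MvPolynomial (Fin n) K) (y : Fin n → ℝ) : ℝ :=
  sSup ((fun I => |tterm v f I y|) '' (f.support : Set (Fin n →₀ ℕ)))

open Classical in
/-- The value set `trop_r(f)(y) ⊆ ℝ`: the unique term of maximal absolute value if
there is one (and it is nonzero), and the interval `[-M, M]` otherwise. -/
noncomputable def tropval {K : Type*} [Field K] [LinearOrder K] [IsStrictOrderedRing K] (v : K → ℝ) {n : ℕ}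
    (f : MvPolynomial (Fin n) K) (y : Fin n → ℝ) : Set ℝ :=
  if ∃ I ∈ f.support, 0 < |tterm v f I y| ∧
      ∀ J ∈ f.support, J ≠ I → |tterm v f J y| < |tterm v f I y| then
    {t | ∃ I ∈ f.support,
      (∀ J ∈ f.support, J ≠ I → |tterm v f J y| < |tterm v f I y|) ∧ t = tterm v f I y}
  else Set.Icc (-(maxAbs v f y)) (maxAbs v f y)

/-- The zero locus of a nonzero real multivariate polynomial has empty interior. -/
lemma poly_zero_interior {n : ℕ} {p : MvPolynomial (Fin n) ℝ} (hp : p ≠ 0) :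
    interior {y : Fin n → ℝ | MvPolynomial.eval y p = 0} = ∅ := by
  by_contra h
  obtain ⟨y₀, hy₀⟩ : (interior {y : Fin n → ℝ | MvPolynomial.eval y p = 0}).Nonempty :=
    Set.nonempty_iff_ne_empty.mpr h
  have hev : (MvPolynomial.eval · p) =ᶠ[nhds y₀] 0 := by
    filter_upwards [isOpen_interior.mem_nhds hy₀] with x hx
    show MvPolynomial.eval x p = 0
    exact (interior_subset hx : x ∈ {y | MvPolynomial.eval y p = 0})
  have hall := (AnalyticOnNhd.eval_mvPolynomial (𝕜 := ℝ)
      p).eqOn_zero_of_preconnected_of_eventuallyEq_zero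
      isPreconnected_univ (Set.mem_univ y₀) hev
  exact hp (MvPolynomial.funext fun x => by simpa using hall (Set.mem_univ x))

lemma abs_tau {K : Type*} [Field K] [LinearOrder K] [IsStrictOrderedRing K] (v : K → ℝ)
    (hnonneg : ∀ a, 0 ≤ v a) (hzero : ∀ a, v a = 0 ↔ a = 0) (c : K) :
    |tau v c| = v c := by
  unfold tau sgnR
  rcases lt_trichotomy 0 c with h | h | h
  · rw [if_pos h]; simp [abs_of_nonneg (hnonneg c)]
  · rw [if_neg (by rw [← h]; exact lt_irrefl 0), if_neg (by rw [← h]; exact lt_irrefl 0)]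
    simp [(hzero c).mpr h.symm]
  · rw [if_neg (by exact fun h' => absurd h (not_lt.mpr h'.le)), if_pos h]
    simp [abs_of_nonneg (hnonneg c)]

lemma abs_tterm {K : Type*} [Field K] [LinearOrder K] [IsStrictOrderedRing K] (v : K → ℝ)
    (hnonneg : ∀ a, 0 ≤ v a) (hzero : ∀ a, v a = 0 ↔ a = 0) {n : ℕ}
    (f : MvPolynomial (Fin n) K) (I : Fin n →₀ ℕ) (y : Fin n → ℝ) :
    |tterm v f I y| = v (MvPolynomial.coeff I f) * |∏ j, (y j) ^ (I j)| := by
  rw [tterm, abs_mul, abs_tau v hnonneg hzero]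

/-- Case analysis: if `0 ∈ tropval v f y` then either some coordinate of `y` is zero,
or two distinct terms have equal absolute values. -/
lemma zero_mem_cases {K : Type*} [Field K] [LinearOrder K] [IsStrictOrderedRing K] (v : K → ℝ)
    (hnonneg : ∀ a, 0 ≤ v a) (hzero : ∀ a, v a = 0 ↔ a = 0) {n : ℕ}
    {f : MvPolynomial (Fin n) K} (hf : f ≠ 0) {y : Fin n → ℝ}
    (h0 : (0 : ℝ) ∈ tropval v f y) :
    (∃ j, y j = 0) ∨
      ∃ I ∈ f.support, ∃ J ∈ f.support, I ≠ J ∧ |tterm v f I y| = |tterm v f J y| := by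
  classical
  by_cases hc : ∃ I ∈ f.support, 0 < |tterm v f I y| ∧
      ∀ J ∈ f.support, J ≠ I → |tterm v f J y| < |tterm v f I y|
  · exfalso
    rw [tropval, if_pos hc] at h0
    obtain ⟨I, hI, hsmI, h00⟩ := h0
    obtain ⟨I₀, hI₀, hpos, hsm⟩ := hc
    rcases eq_or_ne I I₀ with rfl | hne
    · rw [← h00] at hpos; simp at hpos
    · exact lt_asymm (hsm I hI hne) (hsmI I₀ hI₀ hne.symm)
  · obtain ⟨I₀, hI₀, hmaxle⟩ :=
      Finset.exists_max_image f.support (fun I => |tterm v f I y|) (MvPolynomial.support_nonempty.mpr hf)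
    push_neg at hc
    rcases eq_or_lt_of_le (abs_nonneg (tterm v f I₀ y)) with hz | hpos
    · left
      have ht0 : tterm v f I₀ y = 0 := abs_eq_zero.mp hz.symm
      rw [tterm] at ht0
      rcases mul_eq_zero.mp ht0 with htau | hprod
      · exfalso
        have : v (MvPolynomial.coeff I₀ f) = 0 := by
          rw [← abs_tau v hnonneg hzero, htau, abs_zero]
        exact (MvPolynomial.mem_support_iff.mp hI₀) ((hzero _).mp this)
      · obtain ⟨j, _, hj⟩ := Finset.prod_eq_zero_iff.mp hprod
        exact ⟨j, by
          rcases Nat.eq_zero_or_pos (I₀ j) with he | he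
          · rw [he, pow_zero] at hj; exact absurd hj one_ne_zero
          · exact pow_eq_zero_iff he.ne'  |>.mp hj⟩
    · obtain ⟨J, hJ, hne, hle⟩ := hc I₀ hI₀ hpos
      exact Or.inr ⟨I₀, hI₀, J, hJ, hne.symm, le_antisymm hle (hmaxle J hJ)⟩

/-- The set where `0 ∈ tropval v f y` has empty interior. -/
lemma tropval_zero_empty_interior {K : Type*} [Field K] [LinearOrder K] [IsStrictOrderedRing K] (v : K → ℝ)
    (hnonneg : ∀ a, 0 ≤ v a) (hzero : ∀ a, v a = 0 ↔ a = 0) {n : ℕ}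
    (f : MvPolynomial (Fin n) K) (hf : f ≠ 0) :
    interior {y : Fin n → ℝ | (0 : ℝ) ∈ tropval v f y} = ∅ := by
  classical
  set P : MvPolynomial (Fin n) ℝ :=
    (∏ j, MvPolynomial.X j) *
      ∏ p ∈ f.support.offDiag,
        (MvPolynomial.monomial (p.1 + p.1) ((v (MvPolynomial.coeff p.1 f)) ^ 2) -
          MvPolynomial.monomial (p.2 + p.2) ((v (MvPolynomial.coeff p.2 f)) ^ 2)) with hPdef
  have hvpos : ∀ I ∈ f.support, v (MvPolynomial.coeff I f) ≠ 0 := fun I hI h =>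
    (MvPolynomial.mem_support_iff.mp hI) ((hzero _).mp h)
  have hPne : P ≠ 0 := by
    apply mul_ne_zero
    · exact Finset.prod_ne_zero_iff.mpr fun j _ => MvPolynomial.X_ne_zero j
    · refine Finset.prod_ne_zero_iff.mpr fun p hp => ?_
      obtain ⟨hp1, hp2, hpne⟩ := Finset.mem_offDiag.mp hp
      intro hzero'
      have hmon : p.1 + p.1 ≠ p.2 + p.2 := by
        intro h
        apply hpne
        ext j
        have := DFunLike.congr_fun h j
        simp only [Finsupp.add_apply] at this
        omega
      have := congrArg (MvPolynomial.coeff (p.1 + p.1)) hzero'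
      rw [MvPolynomial.coeff_sub, MvPolynomial.coeff_monomial, MvPolynomial.coeff_monomial,
        if_pos rfl, if_neg (Ne.symm hmon), MvPolynomial.coeff_zero, sub_zero] at this
      exact hvpos p.1 hp1 ((pow_eq_zero_iff two_ne_zero).mp this)
  have hsub : {y : Fin n → ℝ | (0 : ℝ) ∈ tropval v f y} ⊆
      {y : Fin n → ℝ | MvPolynomial.eval y P = 0} := by
    intro y hy
    have heval : MvPolynomial.eval y P =
        (∏ j, y j) *
          ∏ p ∈ f.support.offDiag,
            ((v (MvPolynomial.coeff p.1 f)) ^ 2 * ∏ j, (y j) ^ ((p.1 + p.1) j) -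
              (v (MvPolynomial.coeff p.2 f)) ^ 2 * ∏ j, (y j) ^ ((p.2 + p.2) j)) := by
      rw [hPdef, map_mul, map_prod, map_prod]
      congr 1
      · simp
      · refine Finset.prod_congr rfl fun p _ => ?_
        rw [map_sub, MvPolynomial.eval_monomial, MvPolynomial.eval_monomial]
        simp [Finsupp.prod_pow]
    rcases zero_mem_cases v hnonneg hzero hf hy with ⟨j, hj⟩ | ⟨I, hI, J, hJ, hne, heq⟩
    · show MvPolynomial.eval y P = 0
      rw [heval, Finset.prod_eq_zero (Finset.mem_univ j) hj, zero_mul]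
    · show MvPolynomial.eval y P = 0
      rw [heval]
      apply mul_eq_zero_of_right
      apply Finset.prod_eq_zero (i := (I, J)) (Finset.mem_offDiag.mpr ⟨hI, hJ, hne⟩)
      have hsq : ∀ I : Fin n →₀ ℕ, ∏ j, (y j) ^ ((I + I) j) = (∏ j, (y j) ^ (I j)) ^ 2 := by
        intro I
        rw [← Finset.prod_pow]
        refine Finset.prod_congr rfl fun j _ => ?_
        rw [Finsupp.add_apply, pow_add, sq]
      rw [hsq I, hsq J]
      have h1 := abs_tterm v hnonneg hzero f I y
      have h2 := abs_tterm v hnonneg hzero f J y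
      have : (v (MvPolynomial.coeff I f) * |∏ j, (y j) ^ (I j)|) ^ 2 =
          (v (MvPolynomial.coeff J f) * |∏ j, (y j) ^ (J j)|) ^ 2 := by
        rw [← h1, ← h2, heq]
      rw [mul_pow, mul_pow, sq_abs, sq_abs] at this
      rw [this, sub_self]
  have := interior_mono hsub
  rw [poly_zero_interior hPne] at this
  exact Set.subset_empty_iff.mp this

/-- For `S = ⋂ᵢ {fᵢ ≤ 0}`, the difference `⋂ᵢ{trop_r(fᵢ) ≤ 0} \ ⋂ᵢ{trop_r(fᵢ) < 0}`
is contained in `⋃ᵢ {0 ∈ trop_r(fᵢ)}`, and each set `{y : 0 ∈ trop_r(fᵢ)(y)}` has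
empty interior in `ℝⁿ`. -/
theorem stmt_16 {K : Type*} [Field K] [LinearOrder K] [IsStrictOrderedRing K]
    (hsq : ∀ x : K, 0 ≤ x → ∃ y : K, y ^ 2 = x)
    (hodd : ∀ p : Polynomial K, Odd p.natDegree → ∃ x : K, p.eval x = 0)
    (v : K → ℝ)
    (hnonneg : ∀ a, 0 ≤ v a) (hzero : ∀ a, v a = 0 ↔ a = 0)
    (hmul : ∀ a b, v (a * b) = v a * v b)
    (hna : ∀ a b, v (a + b) ≤ max (v a) (v b))
    (hcomp : ∀ a b : K, 0 ≤ a → a ≤ b → v a ≤ v b)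
    (hnt : ∃ a : K, v a ≠ 0 ∧ v a ≠ 1)
    {n m : ℕ} (f : Fin m → MvPolynomial (Fin n) K) (hf : ∀ i, f i ≠ 0) :
    ({y : Fin n → ℝ | ∀ i, ∃ t ∈ tropval v (f i) y, t ≤ 0} \
        {y : Fin n → ℝ | ∀ i, ∃ t : ℝ, tropval v (f i) y = {t} ∧ t < 0}
      ⊆ ⋃ i, {y : Fin n → ℝ | (0 : ℝ) ∈ tropval v (f i) y}) ∧
    ∀ i, interior {y : Fin n → ℝ | (0 : ℝ) ∈ tropval v (f i) y} = ∅ := by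
  classical
  constructor
  · rintro y ⟨h1, h2⟩
    simp only [Set.mem_setOf_eq, not_forall] at h2
    obtain ⟨i, hi⟩ := h2
    push_neg at hi
    refine Set.mem_iUnion.mpr ⟨i, ?_⟩
    show (0 : ℝ) ∈ tropval v (f i) y
    by_cases hc : ∃ I ∈ (f i).support, 0 < |tterm v (f i) I y| ∧
        ∀ J ∈ (f i).support, J ≠ I → |tterm v (f i) J y| < |tterm v (f i) I y|
    · exfalso
      obtain ⟨I₀, hI₀, hpos, hsm⟩ := hc
      have hset : tropval v (f i) y = {tterm v (f i) I₀ y} := by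
        rw [tropval, if_pos ⟨I₀, hI₀, hpos, hsm⟩]
        ext t
        simp only [Set.mem_setOf_eq, Set.mem_singleton_iff]
        constructor
        · rintro ⟨I, hI, hsmI, rfl⟩
          rcases eq_or_ne I I₀ with rfl | hne
          · rfl
          · exact (lt_asymm (hsm I hI hne) (hsmI I₀ hI₀ hne.symm)).elim
        · rintro rfl; exact ⟨I₀, hI₀, hsm, rfl⟩
      obtain ⟨t, ht, hle⟩ := h1 i
      rw [hset, Set.mem_singleton_iff] at ht
      subst ht
      have h0le := hi (tterm v (f i) I₀ y) hset
      have : tterm v (f i) I₀ y = 0 := le_antisymm hle h0le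
      rw [this, abs_zero] at hpos
      exact lt_irrefl 0 hpos
    · rw [tropval, if_neg hc]
      obtain ⟨I, hI⟩ := MvPolynomial.support_nonempty.mpr (hf i)
      have hbdd : BddAbove ((fun I => |tterm v (f i) I y|) ''
          ((f i).support : Set (Fin n →₀ ℕ))) :=
        (((f i).support.finite_toSet).image _).bddAbove
      have hM : 0 ≤ maxAbs v (f i) y := by
        refine le_trans (abs_nonneg (tterm v (f i) I y)) (le_csSup hbdd ?_)
        exact Set.mem_image_of_mem _ (Finset.mem_coe.mpr hI)
      exact ⟨by linarith, hM⟩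
  · intro i
    exact tropval_zero_empty_interior v hnonneg hzero (f i) (hf i)
end

section
/- Let K be a real closed field with compatible non-archimedean absolute value, S ⊆ K_{>0}ⁿ a semialgebraic set, and F = A₁X^{α₁} ⊕ ⋯ ⊕ A_k X^{α_k} ⊕ B₁X^{β₁} ⊕ ⋯ ⊕ B_ℓ X^{β_ℓ} a real tropical polynomial with A_i > 0 and B_j < 0, all in the signed value set of K, such that for every x ∈ S, the maximum of A_i·|x|^{α_i} over i is at least the maximum of |B_j|·|x|^{β_j} over j (i.e., F ≥ 0 on trop_r(S)). Choose a_i, b_j ∈ K with sgn(a_i)|a_i| = A_i and sgn(b_j)|b_j| = B_j. Then for every x ∈ S, |Σ_i a_i x^{α_i}| ≥ |Σ_j b_j x^{β_j}| > 0 (provided ℓ ≥ 1), and hence the quotient φ(x) = (Σ_i a_i x^{α_i}) / (−Σ_j b_j x^{β_j}) satisfies |φ(x)| ≥ 1. -/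
private lemma vprod_aux {K : Type*} [Field K] [LinearOrder K] [IsStrictOrderedRing K] (v : K → ℝ)
    (h1 : v 1 = 1) (hmul : ∀ a b, v (a * b) = v a * v b)
    {ι : Type*} (s : Finset ι) (f : ι → K) :
    v (∏ i ∈ s, f i) = ∏ i ∈ s, v (f i) := by
  induction s using Finset.cons_induction with
  | empty => simpa
  | cons i s hi ih => rw [Finset.prod_cons, hmul, ih, Finset.prod_cons]

private lemma vpow_aux {K : Type*} [Field K] [LinearOrder K] [IsStrictOrderedRing K] (v : K → ℝ)
    (h1 : v 1 = 1) (hmul : ∀ a b, v (a * b) = v a * v b)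
    (c : K) (m : ℕ) : v (c ^ m) = v c ^ m := by
  induction m with
  | zero => simpa
  | succ m ih => rw [pow_succ, hmul, ih, pow_succ]

private lemma vsum_aux {K : Type*} [Field K] [LinearOrder K] [IsStrictOrderedRing K] (v : K → ℝ)
    (hna : ∀ a b, v (a + b) ≤ max (v a) (v b))
    {ι : Type*} (s : Finset ι) (hs : s.Nonempty) (f : ι → K) :
    v (∑ i ∈ s, f i) ≤ s.sup' hs (fun i => v (f i)) := by
  induction hs using Finset.Nonempty.cons_induction with
  | singleton i => simp
  | cons i s hi hs ih =>
    rw [Finset.sum_cons, Finset.sup'_cons]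
    exact (hna _ _).trans (max_le_max le_rfl ih)
    exact hs

/-- Lifting lemma, key estimate: if `F = ⊕ᵢ Aᵢ X^{αᵢ} ⊕ ⊕ⱼ Bⱼ X^{βⱼ}` (with `Aᵢ > 0`,
`Bⱼ < 0`) satisfies `F ≥ 0` on `trop_r(S)` for `S ⊆ K_{>0}ⁿ` semialgebraic, and
`aᵢ, bⱼ ∈ K` have signed values `Aᵢ, Bⱼ`, then for every `x ∈ S` we have
`|Σᵢ aᵢ x^{αᵢ}| ≥ |Σⱼ bⱼ x^{βⱼ}| > 0` and hence `|φ(x)| ≥ 1`. -/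
theorem stmt_17 {K : Type*} [Field K] [LinearOrder K] [IsStrictOrderedRing K]
    (hsq : ∀ x : K, 0 ≤ x → ∃ y : K, y ^ 2 = x)
    (hodd : ∀ p : Polynomial K, Odd p.natDegree → ∃ x : K, p.eval x = 0)
    (v : K → ℝ)
    (hnonneg : ∀ a, 0 ≤ v a) (hzero : ∀ a, v a = 0 ↔ a = 0)
    (hmul : ∀ a b, v (a * b) = v a * v b)
    (hna : ∀ a b, v (a + b) ≤ max (v a) (v b))
    (hcomp : ∀ a b : K, 0 ≤ a → a ≤ b → v a ≤ v b)
    {n : ℕ} (S : Set (Fin n → K)) (hS : IsSA S)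
    (hSpos : ∀ x ∈ S, ∀ l, 0 < x l)
    (k ℓ : ℕ) (hℓ : 1 ≤ ℓ)
    (α : Fin k → Fin n → ℕ) (β : Fin ℓ → Fin n → ℕ)
    (A : Fin k → ℝ) (B : Fin ℓ → ℝ) (hA : ∀ i, 0 < A i) (hB : ∀ j, B j < 0)
    (a : Fin k → K) (b : Fin ℓ → K)
    (ha : ∀ i, sgnR (a i) * v (a i) = A i) (hb : ∀ j, sgnR (b j) * v (b j) = B j)
    (hFge : ∀ x ∈ S, ∀ j : Fin ℓ, ∃ i : Fin k,
      |B j| * ∏ l, (v (x l)) ^ (β j l) ≤ A i * ∏ l, (v (x l)) ^ (α i l)) :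
    ∀ x ∈ S,
      v (∑ j, b j * ∏ l, (x l) ^ (β j l)) ≤ v (∑ i, a i * ∏ l, (x l) ^ (α i l)) ∧
      0 < v (∑ j, b j * ∏ l, (x l) ^ (β j l)) ∧
      1 ≤ v (∑ i, a i * ∏ l, (x l) ^ (α i l)) / v (∑ j, b j * ∏ l, (x l) ^ (β j l)) := by
  -- basic facts about v
  have h1 : v (1 : K) = 1 := by
    have h := hmul 1 1
    rw [one_mul] at h
    have hne : v (1 : K) ≠ 0 := fun h0 => one_ne_zero ((hzero 1).mp h0)
    have : v (1 : K) * v 1 = v 1 * 1 := by rw [← h, mul_one]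
    exact (mul_left_cancel₀ hne this)
  have hneg : ∀ c : K, v (-c) = v c := by
    have hm1 : v (-1 : K) = 1 := by
      have h := hmul (-1) (-1)
      rw [neg_mul_neg, one_mul, h1] at h
      have h2 : (v (-1 : K) - 1) * (v (-1 : K) + 1) = 0 := by ring_nf; nlinarith [h]
      rcases mul_eq_zero.mp h2 with h3 | h3
      · linarith
      · nlinarith [hnonneg (-1 : K)]
    intro c
    have := hmul (-1) c
    rw [neg_one_mul, hm1, one_mul] at this
    exact this
  -- sign facts
  have hapos : ∀ i, 0 < a i ∧ v (a i) = A i := by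
    intro i
    have h := ha i
    rcases lt_trichotomy (a i) 0 with hlt | heq | hgt
    · exfalso
      have hs : sgnR (a i) = -1 := by simp [sgnR, not_lt.mpr hlt.le, hlt]
      rw [hs] at h
      nlinarith [hnonneg (a i), hA i]
    · exfalso
      have hv : v (a i) = 0 := (hzero (a i)).mpr heq
      rw [hv, mul_zero] at h
      exact (hA i).ne h
    · have hs : sgnR (a i) = 1 := by simp [sgnR, hgt]
      rw [hs, one_mul] at h
      exact ⟨hgt, h⟩
  have hbneg : ∀ j, b j < 0 ∧ v (b j) = |B j| := by
    intro j
    have h := hb j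
    rcases lt_trichotomy (b j) 0 with hlt | heq | hgt
    · have hs : sgnR (b j) = -1 := by simp [sgnR, not_lt.mpr hlt.le, hlt]
      rw [hs] at h
      refine ⟨hlt, ?_⟩
      rw [abs_of_neg (hB j)]
      linarith
    · exfalso
      have hv : v (b j) = 0 := (hzero (b j)).mpr heq
      rw [hv, mul_zero] at h
      exact (hB j).ne' h
    · exfalso
      have hs : sgnR (b j) = 1 := by simp [sgnR, hgt]
      rw [hs, one_mul] at h
      nlinarith [hnonneg (b j), hB j]
  intro x hx
  have hxpos : ∀ l, 0 < x l := hSpos x hx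
  -- value of a monomial term
  have hterm : ∀ (c : K) (γ : Fin n → ℕ),
      v (c * ∏ l, x l ^ γ l) = v c * ∏ l, v (x l) ^ γ l := by
    intro c γ
    rw [hmul, vprod_aux v h1 hmul]
    congr 1
    exact Finset.prod_congr rfl fun l _ => vpow_aux v h1 hmul (x l) (γ l)
  have hmono : ∀ (γ : Fin n → ℕ), (0 : K) < ∏ l, x l ^ γ l := fun γ =>
    Finset.prod_pos fun l _ => pow_pos (hxpos l) _
  set P := ∑ i, a i * ∏ l, (x l) ^ (α i l) with hPdef
  set Q := ∑ j, b j * ∏ l, (x l) ^ (β j l) with hQdef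
  have hFinℓ : (Finset.univ : Finset (Fin ℓ)).Nonempty := ⟨⟨0, hℓ⟩, Finset.mem_univ _⟩
  -- Q is negative
  have hQneg : Q < 0 := by
    refine Finset.sum_neg (fun j _ => ?_) hFinℓ
    exact mul_neg_of_neg_of_pos (hbneg j).1 (hmono _)
  have hvQpos : 0 < v Q :=
    lt_of_le_of_ne (hnonneg Q) fun h => hQneg.ne ((hzero Q).mp h.symm)
  -- each P-term is at most v P
  have hPterm : ∀ i, A i * ∏ l, v (x l) ^ α i l ≤ v P := by
    intro i
    have hle : a i * ∏ l, x l ^ α i l ≤ P := by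
      refine Finset.single_le_sum (f := fun i => a i * ∏ l, x l ^ α i l)
        (fun i _ => ?_) (Finset.mem_univ i)
      exact le_of_lt (mul_pos (hapos i).1 (hmono _))
    have := hcomp _ _ (le_of_lt (mul_pos (hapos i).1 (hmono _))) hle
    rwa [hterm, (hapos i).2] at this
  -- v Q is at most some B-term
  have hQle : v Q ≤ v P := by
    have hvQ : v Q = v (-Q) := (hneg Q).symm
    have hnegQ : -Q = ∑ j, (-b j) * ∏ l, x l ^ β j l := by
      rw [hQdef, ← Finset.sum_neg_distrib]
      exact Finset.sum_congr rfl fun j _ => (neg_mul _ _).symm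
    obtain ⟨j, _, hj⟩ := Finset.exists_mem_eq_sup' hFinℓ
      (fun j => v ((-b j) * ∏ l, x l ^ β j l))
    have h2 : v Q ≤ v ((-b j) * ∏ l, x l ^ β j l) := by
      rw [hvQ, hnegQ]
      exact (vsum_aux v hna _ hFinℓ _).trans_eq hj
    have h3 : v ((-b j) * ∏ l, x l ^ β j l) = |B j| * ∏ l, v (x l) ^ β j l := by
      rw [hmul, hneg, (hbneg j).2, vprod_aux v h1 hmul]
      congr 1
      exact Finset.prod_congr rfl fun l _ => vpow_aux v h1 hmul (x l) (β j l)
    obtain ⟨i, hi⟩ := hFge x hx j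
    calc v Q ≤ |B j| * ∏ l, v (x l) ^ β j l := h3 ▸ h2
      _ ≤ A i * ∏ l, v (x l) ^ α i l := hi
      _ ≤ v P := hPterm i
  exact ⟨hQle, hvQpos, (one_le_div hvQpos).mpr hQle⟩
end

section
/- Let A be a commutative ring. Suppose for every finite family F = (f_1,…,f_m) of elements of A we are given a point z_F ∈ ℝ^m, compatibly: whenever τ : {1,…,m} → {1,…,r} satisfies f'_{τ(i)} = f_i for families F = (f_1,…,f_m) and F' = (f'_1,…,f'_r), we have (z_{F'})_{τ(i)} = (z_F)_i; and suppose that for every finite family F there exists a signed seminorm y on A with (|f_i|ˢ_y)_i = z_F. Then the map x : A → ℝ defined by x(f) = (z_{(f)})_1 is well-defined and is itself a signed seminorm on A. -/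
/-- A signed seminorm on a commutative ring. -/
def IsSignedSeminorm {A : Type*} [CommRing A] (s : A → ℝ) : Prop :=
  (∀ f g : A, s (f * g) = s f * s g) ∧
  (∀ f g : A, min (s f) (s g) ≤ s (f + g) ∧ s (f + g) ≤ max (s f) (s g)) ∧
  s 1 = 1 ∧ s (-1) = -1

/-- A compatible family `(z_F)_F` over all finite families `F` of elements of `A`,
each realized by some signed seminorm, defines a signed seminorm
`f ↦ (z_{(f)})₁` on `A`. -/
theorem stmt_18 {A : Type*} [CommRing A]
    (z : (m : ℕ) → (Fin m → A) → (Fin m → ℝ))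
    (hcompat : ∀ (m r : ℕ) (F : Fin m → A) (F' : Fin r → A) (τ : Fin m → Fin r),
      (∀ i, F' (τ i) = F i) → ∀ i, z r F' (τ i) = z m F i)
    (hreal : ∀ (m : ℕ) (F : Fin m → A),
      ∃ s : A → ℝ, IsSignedSeminorm s ∧ ∀ i, s (F i) = z m F i) :
    (∀ (m : ℕ) (F : Fin m → A) (i : Fin m) (f : A), F i = f →
      z m F i = z 1 (fun _ => f) 0) ∧
    IsSignedSeminorm (fun f : A => z 1 (fun _ => f) 0) := by

  have key : ∀ (m : ℕ) (F : Fin m → A) (i : Fin m) (f : A), F i = f →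
      z m F i = z 1 (fun _ => f) 0 := by
    intro m F i f hf
    exact hcompat 1 m (fun _ => f) F (fun _ => i) (fun _ => hf) 0
  refine ⟨key, ?_, ?_, ?_, ?_⟩
  · intro f g
    obtain ⟨s, hs, hsF⟩ := hreal 4 ![f, g, f + g, f * g]
    have h0 := (key 4 ![f, g, f + g, f * g] 0 f rfl).symm.trans (hsF 0).symm
    have h1 := (key 4 ![f, g, f + g, f * g] 1 g rfl).symm.trans (hsF 1).symm
    have h3 := (key 4 ![f, g, f + g, f * g] 3 (f * g) rfl).symm.trans (hsF 3).symm
    simp only [Matrix.cons_val_zero, Matrix.cons_val_one, Matrix.head_cons,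
      Matrix.cons_val_fin_one] at *
    rw [h0, h1, h3]
    exact hs.1 f g
  · intro f g
    obtain ⟨s, hs, hsF⟩ := hreal 4 ![f, g, f + g, f * g]
    have h0 := (key 4 ![f, g, f + g, f * g] 0 f rfl).symm.trans (hsF 0).symm
    have h1 := (key 4 ![f, g, f + g, f * g] 1 g rfl).symm.trans (hsF 1).symm
    have h2 := (key 4 ![f, g, f + g, f * g] 2 (f + g) rfl).symm.trans (hsF 2).symm
    simp only [Matrix.cons_val_zero, Matrix.cons_val_one, Matrix.head_cons] at *
    rw [h0, h1, h2]
    exact hs.2.1 f g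
  · obtain ⟨s, hs, hsF⟩ := hreal 1 (fun _ => (1 : A))
    exact (hsF 0).symm.trans hs.2.2.1
  · obtain ⟨s, hs, hsF⟩ := hreal 1 (fun _ => (-1 : A))
    exact (hsF 0).symm.trans hs.2.2.2
end
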